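/- arXiv:0806.0541 — 3 statements merged into one kernel-verified Lean document; each statement's English description precedes it below -/
import Mathlib

section
/- Let Ω be the set of parameters ω = (α, γ) where α = (α_j)_{j≥1} is a summable sequence of nonnegative reals and γ ≥ 0; for ω ∈ Ω let σ_ω = γδ₀ + Σ_j α_j δ_{α_j} (a finite measure on [0,∞)) and let Π(ω,λ) = e^{−γλ²/4} ∏_{j=1}^∞ 1/(1 + α_j λ²/4) be the modified Pólya function. Let (ω⁽ⁿ⁾) be a sequence in Ω and ω ∈ Ω. Then the following are equivalent: (a) for every bounded continuous function f on [0,∞), ∫ f dσ_{ω⁽ⁿ⁾} → ∫ f dσ_ω as n → ∞; (b) Π(ω⁽ⁿ⁾, ·) converges to Π(ω, ·) uniformly on every compact subset of ℝ. -/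
open Filter

/-- The modified Pólya function of parameter `ω = (α, γ)`:
`Π(ω,λ) = e^{−γλ²/4} ∏_{j=1}^∞ 1/(1 + α_j λ²/4)`. -/
noncomputable def polyaFun (α : ℕ → ℝ) (γ : ℝ) (t : ℝ) : ℝ :=
  Real.exp (-(γ * t ^ 2) / 4) * ∏' j : ℕ, (1 + α j * t ^ 2 / 4)⁻¹

namespace PolyaStmt14

/-! ### Scalar inequalities -/

lemma log_div_bounds {s t : ℝ} (hs : 0 < s) (hst : s ≤ t) :
    (t - s) / t ≤ Real.log t - Real.log s ∧ Real.log t - Real.log s ≤ (t - s) / s := by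
  have ht : 0 < t := lt_of_lt_of_le hs hst
  constructor
  · have h1 : Real.log (s / t) ≤ s / t - 1 := Real.log_le_sub_one_of_pos (by positivity)
    rw [Real.log_div (ne_of_gt hs) (ne_of_gt ht)] at h1
    have : s / t - 1 = -((t - s) / t) := by field_simp; ring
    linarith [this ▸ h1]
  · have h1 : Real.log (t / s) ≤ t / s - 1 := Real.log_le_sub_one_of_pos (by positivity)
    rw [Real.log_div (ne_of_gt ht) (ne_of_gt hs)] at h1
    have : t / s - 1 = (t - s) / s := by field_simp
    linarith [this ▸ h1]

lemma pow_sub_pow_bounds {s t : ℝ} (hs : 0 ≤ s) (hst : s ≤ t) (m : ℕ) :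
    (m + 1 : ℝ) * s ^ m * (t - s) ≤ t ^ (m + 1) - s ^ (m + 1) ∧
      t ^ (m + 1) - s ^ (m + 1) ≤ (m + 1 : ℝ) * t ^ m * (t - s) := by
  have ht : 0 ≤ t := le_trans hs hst
  induction m with
  | zero => simp
  | succ m ih =>
    obtain ⟨ih1, ih2⟩ := ih
    have ht : 0 ≤ t := le_trans hs hst
    have hpow : s ^ (m + 1) ≤ t ^ (m + 1) := pow_le_pow_left₀ hs hst _
    have hts : 0 ≤ t - s := sub_nonneg.2 hst
    have h2 : s * ((m + 1 : ℝ) * s ^ m * (t - s)) ≤ s * (t ^ (m+1) - s ^ (m+1)) :=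
      mul_le_mul_of_nonneg_left ih1 hs
    have h2' : t * (t ^ (m+1) - s ^ (m+1)) ≤ t * ((m + 1 : ℝ) * t ^ m * (t - s)) :=
      mul_le_mul_of_nonneg_left ih2 ht
    have h3 : s ^ (m+1) * (t - s) ≤ t ^ (m+1) * (t - s) :=
      mul_le_mul_of_nonneg_right hpow hts
    constructor
    · have := calc ((m:ℝ)+1+1) * s ^ (m+1) * (t - s)
          = s * ((m + 1 : ℝ) * s ^ m * (t - s)) + s ^ (m+1) * (t - s) := by ring
        _ ≤ s * (t ^ (m+1) - s ^ (m+1)) + t ^ (m+1) * (t - s) := add_le_add h2 h3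
        _ = t ^ (m+2) - s ^ (m+2) := by ring
      push_cast
      linarith [this]
    · have := calc t ^ (m+2) - s ^ (m+2)
          = t * (t ^ (m+1) - s ^ (m+1)) + s ^ (m+1) * (t - s) := by ring
        _ ≤ t * ((m + 1 : ℝ) * t ^ m * (t - s)) + t ^ (m+1) * (t - s) := add_le_add h2' h3
        _ = ((m:ℝ)+1+1) * t ^ (m+1) * (t - s) := by ring
      push_cast
      linarith [this]

lemma inv_pow_bounds {s t : ℝ} (hs : 1 ≤ s) (hst : s ≤ t) (m : ℕ) :
    ((m:ℝ) + 1) * (t - s) / t ^ (m + 2) ≤ 1 / s ^ (m + 1) - 1 / t ^ (m + 1) ∧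
      1 / s ^ (m + 1) - 1 / t ^ (m + 1) ≤ ((m:ℝ) + 1) * (t - s) / s ^ (m + 2) := by
  have hs0 : (0:ℝ) < s := lt_of_lt_of_le one_pos hs
  have ht0 : (0:ℝ) < t := lt_of_lt_of_le hs0 hst
  obtain ⟨h1, h2⟩ := pow_sub_pow_bounds (le_of_lt hs0) hst m
  have hsp : (0:ℝ) < s ^ (m+1) := pow_pos hs0 _
  have htp : (0:ℝ) < t ^ (m+1) := pow_pos ht0 _
  have heq : 1 / s ^ (m + 1) - 1 / t ^ (m + 1)
      = (t ^ (m+1) - s ^ (m+1)) / (s ^ (m+1) * t ^ (m+1)) := by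
    field_simp
  constructor
  · rw [heq]
    have hb : ((m:ℝ) + 1) * (t - s) / t ^ (m + 2)
        ≤ ((m:ℝ)+1) * s ^ m * (t - s) / (s ^ (m+1) * t ^ (m+1)) := by
      rw [div_le_div_iff₀ (by positivity) (by positivity)]
      have h4 : s ^ (m+1) * t ^ (m+1) ≤ s ^ m * t ^ (m+2) := by
        have : s ^ (m+1) * t ^ (m+1) = s ^ m * (s * t ^ (m+1)) := by ring
        have h5 : s * t ^ (m+1) ≤ t ^ (m+2) := by
          have := mul_le_mul_of_nonneg_right hst (le_of_lt (pow_pos ht0 (m+1)))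
          calc s * t ^ (m+1) ≤ t * t ^ (m+1) := this
            _ = t ^ (m+2) := by ring
        calc s ^ (m+1) * t ^ (m+1) = s ^ m * (s * t ^ (m+1)) := by ring
          _ ≤ s ^ m * t ^ (m+2) := mul_le_mul_of_nonneg_left h5 (pow_nonneg (le_of_lt hs0) m)
      have hts : 0 ≤ t - s := sub_nonneg.2 hst
      calc ((m:ℝ) + 1) * (t - s) * (s ^ (m+1) * t ^ (m+1))
          ≤ ((m:ℝ) + 1) * (t - s) * (s ^ m * t ^ (m+2)) := by
            apply mul_le_mul_of_nonneg_left h4 (by positivity)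
        _ = ((m:ℝ)+1) * s ^ m * (t - s) * t ^ (m+2) := by ring
    refine le_trans hb ?_
    apply div_le_div_of_nonneg_right ?_ (by positivity) |>.trans_eq rfl
    · exact_mod_cast h1
  · rw [heq]
    have hb : (t ^ (m+1) - s ^ (m+1)) / (s ^ (m+1) * t ^ (m+1))
        ≤ ((m:ℝ)+1) * t ^ m * (t - s) / (s ^ (m+1) * t ^ (m+1)) := by
      apply div_le_div_of_nonneg_right ?_ (by positivity) |>.trans_eq rfl
      exact_mod_cast h2
    refine le_trans hb ?_
    rw [div_le_div_iff₀ (by positivity) (by positivity)]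
    have hts : 0 ≤ t - s := sub_nonneg.2 hst
    have h4 : t ^ m * s ^ (m+2) ≤ s ^ (m+1) * t ^ (m+1) := by
      have h5 : s ^ (m+2) = s ^ (m+1) * s := by ring
      have h6 : t ^ m * s ≤ t ^ (m+1) := by
        calc t ^ m * s ≤ t ^ m * t := mul_le_mul_of_nonneg_left hst (pow_nonneg (le_of_lt ht0) m)
          _ = t ^ (m+1) := by ring
      calc t ^ m * s ^ (m+2) = s ^ (m+1) * (t ^ m * s) := by ring
        _ ≤ s ^ (m+1) * t ^ (m+1) := mul_le_mul_of_nonneg_left h6 (le_of_lt hsp)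
    calc ((m:ℝ)+1) * t ^ m * (t - s) * s ^ (m+2)
        = ((m:ℝ)+1) * (t - s) * (t ^ m * s ^ (m+2)) := by ring
      _ ≤ ((m:ℝ)+1) * (t - s) * (s ^ (m+1) * t ^ (m+1)) := by
          apply mul_le_mul_of_nonneg_left h4 (by positivity)
      _ = ((m:ℝ)+1) * (t - s) * (s ^ (m+1) * t ^ (m+1)) := rfl



/-! ### The basic functions -/

/-- `Fm α γ u = γ u + Σ log(1+α_k u)`; one has `Π(ω, t) = exp (−Fm α γ (t²/4))`. -/
noncomputable def Fm (α : ℕ → ℝ) (γ : ℝ) (u : ℝ) : ℝ := γ * u + ∑' k, Real.log (1 + α k * u)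

/-- `Tm α γ m u = γ + Σ α_k/(1+α_k u)^m = ∫ (1+xu)^{-m} dσ_ω`. -/
noncomputable def Tm (α : ℕ → ℝ) (γ : ℝ) (m : ℕ) (u : ℝ) : ℝ :=
  γ + ∑' k, α k / (1 + α k * u) ^ m

/-- `Um α m u = Σ α_k²/(1+α_k u)^(m+1) = ∫ x(1+xu)^{-(m+1)} dσ_ω`; `-(Tm m)' = m • Um (m-1)`. -/
noncomputable def Um (α : ℕ → ℝ) (m : ℕ) (u : ℝ) : ℝ :=
  ∑' k, (α k) ^ 2 / (1 + α k * u) ^ (m + 1)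

section Basic

variable {α : ℕ → ℝ} {γ : ℝ}

lemma one_le_base (hαn : ∀ k, 0 ≤ α k) {u : ℝ} (hu : 0 ≤ u) (k : ℕ) : 1 ≤ 1 + α k * u := by
  nlinarith [hαn k, hu]

lemma base_pos (hαn : ∀ k, 0 ≤ α k) {u : ℝ} (hu : 0 ≤ u) (k : ℕ) : 0 < 1 + α k * u :=
  lt_of_lt_of_le one_pos (one_le_base hαn hu k)

lemma log_term_nonneg (hαn : ∀ k, 0 ≤ α k) {u : ℝ} (hu : 0 ≤ u) (k : ℕ) :
    0 ≤ Real.log (1 + α k * u) :=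
  Real.log_nonneg (one_le_base hαn hu k)

lemma log_term_le (hαn : ∀ k, 0 ≤ α k) {u : ℝ} (hu : 0 ≤ u) (k : ℕ) :
    Real.log (1 + α k * u) ≤ α k * u := by
  have := Real.log_le_sub_one_of_pos (base_pos hαn hu k)
  linarith

lemma summable_log (hα : Summable α) (hαn : ∀ k, 0 ≤ α k) {u : ℝ} (hu : 0 ≤ u) :
    Summable (fun k => Real.log (1 + α k * u)) :=
  Summable.of_nonneg_of_le (log_term_nonneg hαn hu) (log_term_le hαn hu) (hα.mul_right u)

lemma frac_nonneg (hαn : ∀ k, 0 ≤ α k) {u : ℝ} (hu : 0 ≤ u) (m : ℕ) (k : ℕ) :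
    0 ≤ α k / (1 + α k * u) ^ m :=
  div_nonneg (hαn k) (pow_nonneg (le_of_lt (base_pos hαn hu k)) m)

lemma frac_le (hαn : ∀ k, 0 ≤ α k) {u : ℝ} (hu : 0 ≤ u) (m : ℕ) (k : ℕ) :
    α k / (1 + α k * u) ^ m ≤ α k :=
  div_le_self (hαn k) (one_le_pow₀ (one_le_base hαn hu k))

lemma summable_frac (hα : Summable α) (hαn : ∀ k, 0 ≤ α k) {u : ℝ} (hu : 0 ≤ u) (m : ℕ) :
    Summable (fun k => α k / (1 + α k * u) ^ m) :=
  Summable.of_nonneg_of_le (frac_nonneg hαn hu m) (frac_le hαn hu m) hα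

lemma alpha_le_tsum (hα : Summable α) (hαn : ∀ k, 0 ≤ α k) (k : ℕ) : α k ≤ ∑' j, α j :=
  Summable.le_tsum hα k (fun j _ => hαn j)

lemma sq_term_nonneg (hαn : ∀ k, 0 ≤ α k) {u : ℝ} (hu : 0 ≤ u) (m : ℕ) (k : ℕ) :
    0 ≤ (α k) ^ 2 / (1 + α k * u) ^ (m + 1) := by
  have := base_pos hαn hu k
  positivity

lemma sq_term_le (hα : Summable α) (hαn : ∀ k, 0 ≤ α k) {u : ℝ} (hu : 0 ≤ u) (m : ℕ) (k : ℕ) :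
    (α k) ^ 2 / (1 + α k * u) ^ (m + 1) ≤ (∑' j, α j) * α k := by
  have h2 : (α k) ^ 2 / (1 + α k * u) ^ (m + 1) ≤ (α k) ^ 2 :=
    div_le_self (sq_nonneg _) (one_le_pow₀ (one_le_base hαn hu k))
  have h3 : (α k) ^ 2 ≤ (∑' j, α j) * α k := by
    have := alpha_le_tsum hα hαn k
    nlinarith [hαn k]
  linarith

lemma summable_sq (hα : Summable α) (hαn : ∀ k, 0 ≤ α k) {u : ℝ} (hu : 0 ≤ u) (m : ℕ) :
    Summable (fun k => (α k) ^ 2 / (1 + α k * u) ^ (m + 1)) :=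
  Summable.of_nonneg_of_le (sq_term_nonneg hαn hu m) (sq_term_le hα hαn hu m) (hα.mul_left _)

end Basic
section Struct

variable {α : ℕ → ℝ} {γ : ℝ}

lemma tsum_log_le (hα : Summable α) (hαn : ∀ k, 0 ≤ α k) {u : ℝ} (hu : 0 ≤ u) :
    ∑' k, Real.log (1 + α k * u) ≤ (∑' k, α k) * u := by
  calc ∑' k, Real.log (1 + α k * u) ≤ ∑' k, α k * u :=
        Summable.tsum_le_tsum (log_term_le hαn hu) (summable_log hα hαn hu) (hα.mul_right u)
    _ = (∑' k, α k) * u := by rw [tsum_mul_right]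

lemma Fm_nonneg (hα : Summable α) (hαn : ∀ k, 0 ≤ α k) (hγ : 0 ≤ γ) {u : ℝ} (hu : 0 ≤ u) :
    0 ≤ Fm α γ u := by
  have h1 : 0 ≤ ∑' k, Real.log (1 + α k * u) := tsum_nonneg (log_term_nonneg hαn hu)
  have h2 : 0 ≤ γ * u := mul_nonneg hγ hu
  unfold Fm; linarith

lemma Tm_nonneg (hα : Summable α) (hαn : ∀ k, 0 ≤ α k) (hγ : 0 ≤ γ) {u : ℝ} (hu : 0 ≤ u)
    (m : ℕ) : 0 ≤ Tm α γ m u := by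
  have h1 : 0 ≤ ∑' k, α k / (1 + α k * u) ^ m := tsum_nonneg (frac_nonneg hαn hu m)
  unfold Tm; linarith

lemma Tm_le_mass (hα : Summable α) (hαn : ∀ k, 0 ≤ α k) {u : ℝ} (hu : 0 ≤ u) (m : ℕ) :
    Tm α γ m u ≤ γ + ∑' k, α k := by
  unfold Tm
  have := Summable.tsum_le_tsum (frac_le hαn hu m) (summable_frac hα hαn hu m) hα
  linarith

lemma mass_eq_Tm_zero {u : ℝ} : Tm α γ 0 u = γ + ∑' k, α k := by
  unfold Tm; simp

lemma Um_nonneg (hαn : ∀ k, 0 ≤ α k) {u : ℝ} (hu : 0 ≤ u) (m : ℕ) : 0 ≤ Um α m u :=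
  tsum_nonneg (sq_term_nonneg hαn hu m)

lemma Um_le (hα : Summable α) (hαn : ∀ k, 0 ≤ α k) {u : ℝ} (hu : 0 ≤ u) (m : ℕ) :
    Um α m u ≤ (∑' k, α k) * (∑' k, α k) := by
  unfold Um
  calc ∑' k, (α k) ^ 2 / (1 + α k * u) ^ (m + 1) ≤ ∑' k, (∑' j, α j) * α k :=
        Summable.tsum_le_tsum (sq_term_le hα hαn hu m) (summable_sq hα hαn hu m) (hα.mul_left _)
    _ = (∑' k, α k) * (∑' k, α k) := by rw [tsum_mul_left]

lemma Fm_slope_upper (hα : Summable α) (hαn : ∀ k, 0 ≤ α k) {u v : ℝ}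
    (hu : 0 ≤ u) (huv : u ≤ v) :
    Fm α γ v - Fm α γ u ≤ (v - u) * Tm α γ 1 u := by
  have hv : 0 ≤ v := le_trans hu huv
  have hsl : ∀ k, Real.log (1 + α k * v) - Real.log (1 + α k * u)
      ≤ (v - u) * (α k / (1 + α k * u) ^ 1) := by
    intro k
    have hst : 1 + α k * u ≤ 1 + α k * v := by nlinarith [hαn k]
    have := (log_div_bounds (base_pos hαn hu k) hst).2
    have heq : ((1 + α k * v) - (1 + α k * u)) / (1 + α k * u)
        = (v - u) * (α k / (1 + α k * u) ^ 1) := by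
      rw [pow_one]; ring
    linarith [heq ▸ this]
  have hdiff : Fm α γ v - Fm α γ u
      = γ * (v - u) + ∑' k, (Real.log (1 + α k * v) - Real.log (1 + α k * u)) := by
    unfold Fm
    rw [Summable.tsum_sub (summable_log hα hαn hv) (summable_log hα hαn hu)]
    ring
  have hsum : ∑' k, (Real.log (1 + α k * v) - Real.log (1 + α k * u))
      ≤ ∑' k, (v - u) * (α k / (1 + α k * u) ^ 1) := by
    apply Summable.tsum_le_tsum hsl
    · exact ((summable_log hα hαn hv).sub (summable_log hα hαn hu))
    · exact (summable_frac hα hαn hu 1).mul_left _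
  rw [hdiff]
  rw [tsum_mul_left] at hsum
  unfold Tm
  nlinarith [hsum]

lemma Fm_slope_lower (hα : Summable α) (hαn : ∀ k, 0 ≤ α k) {u v : ℝ}
    (hu : 0 ≤ u) (huv : u ≤ v) :
    (v - u) * Tm α γ 1 v ≤ Fm α γ v - Fm α γ u := by
  have hv : 0 ≤ v := le_trans hu huv
  have hsl : ∀ k, (v - u) * (α k / (1 + α k * v) ^ 1)
      ≤ Real.log (1 + α k * v) - Real.log (1 + α k * u) := by
    intro k
    have hst : 1 + α k * u ≤ 1 + α k * v := by nlinarith [hαn k]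
    have := (log_div_bounds (base_pos hαn hu k) hst).1
    have heq : ((1 + α k * v) - (1 + α k * u)) / (1 + α k * v)
        = (v - u) * (α k / (1 + α k * v) ^ 1) := by
      rw [pow_one]; ring
    linarith [heq ▸ this]
  have hdiff : Fm α γ v - Fm α γ u
      = γ * (v - u) + ∑' k, (Real.log (1 + α k * v) - Real.log (1 + α k * u)) := by
    unfold Fm
    rw [Summable.tsum_sub (summable_log hα hαn hv) (summable_log hα hαn hu)]
    ring
  have hsum : ∑' k, (v - u) * (α k / (1 + α k * v) ^ 1)
      ≤ ∑' k, (Real.log (1 + α k * v) - Real.log (1 + α k * u)) := by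
    apply Summable.tsum_le_tsum hsl
    · exact (summable_frac hα hαn hv 1).mul_left _
    · exact ((summable_log hα hαn hv).sub (summable_log hα hαn hu))
  rw [hdiff]
  rw [tsum_mul_left] at hsum
  unfold Tm
  nlinarith [hsum]

lemma Tm_slope_upper (hα : Summable α) (hαn : ∀ k, 0 ≤ α k) {u v : ℝ}
    (hu : 0 ≤ u) (huv : u ≤ v) (m : ℕ) :
    Tm α γ (m + 1) u - Tm α γ (m + 1) v ≤ ((m:ℝ) + 1) * (v - u) * Um α (m + 1) u := by
  have hv : 0 ≤ v := le_trans hu huv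
  have hsl : ∀ k, α k / (1 + α k * u) ^ (m + 1) - α k / (1 + α k * v) ^ (m + 1)
      ≤ ((m:ℝ) + 1) * (v - u) * ((α k) ^ 2 / (1 + α k * u) ^ (m + 2)) := by
    intro k
    have hst : 1 + α k * u ≤ 1 + α k * v := by nlinarith [hαn k]
    have h1 := (inv_pow_bounds (one_le_base hαn hu k) hst m).2
    have hsp : (0:ℝ) < (1 + α k * u) ^ (m + 2) := pow_pos (base_pos hαn hu k) _
    have hvp : (0:ℝ) < (1 + α k * v) ^ (m + 1) := pow_pos (base_pos hαn hv k) _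
    have hup : (0:ℝ) < (1 + α k * u) ^ (m + 1) := pow_pos (base_pos hαn hu k) _
    have hmul := mul_le_mul_of_nonneg_left h1 (hαn k)
    have e1 : α k * (1 / (1 + α k * u) ^ (m + 1) - 1 / (1 + α k * v) ^ (m + 1))
        = α k / (1 + α k * u) ^ (m + 1) - α k / (1 + α k * v) ^ (m + 1) := by ring
    have e2 : α k * (((m:ℝ) + 1) * ((1 + α k * v) - (1 + α k * u)) / (1 + α k * u) ^ (m + 2))
        = ((m:ℝ) + 1) * (v - u) * ((α k) ^ 2 / (1 + α k * u) ^ (m + 2)) := by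
      field_simp; ring
    rw [e1, e2] at hmul
    exact hmul
  have hdiff : Tm α γ (m + 1) u - Tm α γ (m + 1) v
      = ∑' k, (α k / (1 + α k * u) ^ (m + 1) - α k / (1 + α k * v) ^ (m + 1)) := by
    unfold Tm
    rw [Summable.tsum_sub (summable_frac hα hαn hu (m+1)) (summable_frac hα hαn hv (m+1))]
    ring
  rw [hdiff]
  calc ∑' k, (α k / (1 + α k * u) ^ (m + 1) - α k / (1 + α k * v) ^ (m + 1))
      ≤ ∑' k, ((m:ℝ) + 1) * (v - u) * ((α k) ^ 2 / (1 + α k * u) ^ ((m + 1) + 1)) := by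
        apply Summable.tsum_le_tsum hsl
        · exact (summable_frac hα hαn hu (m+1)).sub (summable_frac hα hαn hv (m+1))
        · exact (summable_sq hα hαn hu (m+1)).mul_left _
    _ = ((m:ℝ) + 1) * (v - u) * Um α (m + 1) u := by rw [tsum_mul_left]; rfl

lemma Tm_slope_lower (hα : Summable α) (hαn : ∀ k, 0 ≤ α k) {u v : ℝ}
    (hu : 0 ≤ u) (huv : u ≤ v) (m : ℕ) :
    ((m:ℝ) + 1) * (v - u) * Um α (m + 1) v ≤ Tm α γ (m + 1) u - Tm α γ (m + 1) v := by
  have hv : 0 ≤ v := le_trans hu huv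
  have hsl : ∀ k, ((m:ℝ) + 1) * (v - u) * ((α k) ^ 2 / (1 + α k * v) ^ ((m + 1) + 1))
      ≤ α k / (1 + α k * u) ^ (m + 1) - α k / (1 + α k * v) ^ (m + 1) := by
    intro k
    have hst : 1 + α k * u ≤ 1 + α k * v := by nlinarith [hαn k]
    have h1 := (inv_pow_bounds (one_le_base hαn hu k) hst m).1
    have hmul := mul_le_mul_of_nonneg_left h1 (hαn k)
    have e1 : α k * (1 / (1 + α k * u) ^ (m + 1) - 1 / (1 + α k * v) ^ (m + 1))
        = α k / (1 + α k * u) ^ (m + 1) - α k / (1 + α k * v) ^ (m + 1) := by ring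
    have e2 : α k * (((m:ℝ) + 1) * ((1 + α k * v) - (1 + α k * u)) / (1 + α k * v) ^ (m + 2))
        = ((m:ℝ) + 1) * (v - u) * ((α k) ^ 2 / (1 + α k * v) ^ (m + 2)) := by
      have := base_pos hαn hv k
      field_simp; ring
    rw [e1, e2] at hmul
    exact hmul
  have hdiff : Tm α γ (m + 1) u - Tm α γ (m + 1) v
      = ∑' k, (α k / (1 + α k * u) ^ (m + 1) - α k / (1 + α k * v) ^ (m + 1)) := by
    unfold Tm
    rw [Summable.tsum_sub (summable_frac hα hαn hu (m+1)) (summable_frac hα hαn hv (m+1))]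
    ring
  rw [hdiff]
  calc ((m:ℝ) + 1) * (v - u) * Um α (m + 1) v
      = ∑' k, ((m:ℝ) + 1) * (v - u) * ((α k) ^ 2 / (1 + α k * v) ^ ((m + 1) + 1)) := by
        rw [tsum_mul_left]; rfl
    _ ≤ _ := by
        apply Summable.tsum_le_tsum hsl
        · exact (summable_sq hα hαn hv (m+1)).mul_left _
        · exact (summable_frac hα hαn hu (m+1)).sub (summable_frac hα hαn hv (m+1))

lemma Um_anti (hα : Summable α) (hαn : ∀ k, 0 ≤ α k) {u v : ℝ}
    (hu : 0 ≤ u) (huv : u ≤ v) (m : ℕ) : Um α m v ≤ Um α m u := by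
  unfold Um
  apply Summable.tsum_le_tsum ?_ (summable_sq hα hαn (le_trans hu huv) m) (summable_sq hα hαn hu m)
  intro k
  have hv : 0 ≤ v := le_trans hu huv
  apply div_le_div_of_nonneg_left (sq_nonneg _) (pow_pos (base_pos hαn hu k) _)
  apply pow_le_pow_left₀ (le_of_lt (base_pos hαn hu k))
  nlinarith [hαn k]

lemma Um_lip (hα : Summable α) (hαn : ∀ k, 0 ≤ α k) {u v : ℝ}
    (hu : 0 ≤ u) (huv : u ≤ v) (m : ℕ) :
    Um α m u - Um α m v ≤ ((m:ℝ) + 1) * (v - u) * ((∑' k, α k) * (∑' k, α k) * (∑' k, α k)) := by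
  have hv : 0 ≤ v := le_trans hu huv
  have hsl : ∀ k, (α k) ^ 2 / (1 + α k * u) ^ (m + 1) - (α k) ^ 2 / (1 + α k * v) ^ (m + 1)
      ≤ ((m:ℝ) + 1) * (v - u) * ((∑' j, α j) * (∑' j, α j) * α k) := by
    intro k
    have hst : 1 + α k * u ≤ 1 + α k * v := by nlinarith [hαn k]
    have h1 := (inv_pow_bounds (one_le_base hαn hu k) hst m).2
    have hmul := mul_le_mul_of_nonneg_left h1 (sq_nonneg (α k))
    have e1 : (α k) ^ 2 * (1 / (1 + α k * u) ^ (m + 1) - 1 / (1 + α k * v) ^ (m + 1))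
        = (α k) ^ 2 / (1 + α k * u) ^ (m + 1) - (α k) ^ 2 / (1 + α k * v) ^ (m + 1) := by ring
    rw [e1] at hmul
    refine le_trans hmul ?_
    have hsp : (1:ℝ) ≤ (1 + α k * u) ^ (m + 2) := one_le_pow₀ (one_le_base hαn hu k)
    have h2 : (α k) ^ 2 * (((m:ℝ) + 1) * ((1 + α k * v) - (1 + α k * u)) / (1 + α k * u) ^ (m + 2))
        ≤ (α k) ^ 2 * (((m:ℝ) + 1) * ((1 + α k * v) - (1 + α k * u))) := by
      apply mul_le_mul_of_nonneg_left ?_ (sq_nonneg _)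
      apply div_le_self ?_ hsp
      have hnn : (0:ℝ) ≤ (1 + α k * v) - (1 + α k * u) := by linarith
      exact mul_nonneg (by positivity) hnn
    refine le_trans h2 ?_
    have e3 : (α k) ^ 2 * (((m:ℝ) + 1) * ((1 + α k * v) - (1 + α k * u)))
        = ((m:ℝ) + 1) * (v - u) * ((α k) * (α k) * (α k)) := by ring
    rw [e3]
    apply mul_le_mul_of_nonneg_left ?_ (mul_nonneg (by positivity) (sub_nonneg.2 huv))
    have h4 := alpha_le_tsum hα hαn k
    have h5 := hαn k
    have h6 : (0:ℝ) ≤ ∑' j, α j := tsum_nonneg hαn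
    exact mul_le_mul_of_nonneg_right (mul_le_mul h4 h4 h5 h6) h5
  have hdiff : Um α m u - Um α m v
      = ∑' k, ((α k) ^ 2 / (1 + α k * u) ^ (m + 1) - (α k) ^ 2 / (1 + α k * v) ^ (m + 1)) := by
    unfold Um
    rw [Summable.tsum_sub (summable_sq hα hαn hu m) (summable_sq hα hαn hv m)]
  rw [hdiff]
  calc ∑' k, ((α k) ^ 2 / (1 + α k * u) ^ (m + 1) - (α k) ^ 2 / (1 + α k * v) ^ (m + 1))
      ≤ ∑' k, ((m:ℝ) + 1) * (v - u) * ((∑' j, α j) * (∑' j, α j) * α k) := by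
        apply Summable.tsum_le_tsum hsl
        · exact (summable_sq hα hαn hu m).sub (summable_sq hα hαn hv m)
        · exact ((hα.mul_left _).mul_left _)
    _ = ((m:ℝ) + 1) * (v - u) * ((∑' k, α k) * (∑' k, α k) * (∑' k, α k)) := by
        rw [tsum_mul_left, tsum_mul_left]

lemma Tm_succ_eq (hα : Summable α) (hαn : ∀ k, 0 ≤ α k) {u : ℝ} (hu : 0 ≤ u) (m : ℕ) :
    Tm α γ (m + 1) u = Tm α γ m u - u * Um α m u := by
  have hterm : ∀ k, α k / (1 + α k * u) ^ (m + 1)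
      = α k / (1 + α k * u) ^ m - u * ((α k) ^ 2 / (1 + α k * u) ^ (m + 1)) := by
    intro k
    have hb := base_pos hαn hu k
    have hbne : (1 + α k * u) ≠ 0 := ne_of_gt hb
    field_simp
    ring
  unfold Tm Um
  rw [tsum_congr hterm,
    Summable.tsum_sub (summable_frac hα hαn hu m) ((summable_sq hα hαn hu m).mul_left u),
    tsum_mul_left]
  ring

end Struct
section Glue

variable {α : ℕ → ℝ} {γ : ℝ}

lemma tendsto_of_eps (z : ℕ → ℝ) (L : ℝ)
    (h : ∀ ε : ℝ, 0 < ε → ∀ᶠ n in atTop, |z n - L| ≤ ε) :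
    Tendsto z atTop (nhds L) := by
  rw [Metric.tendsto_nhds]
  intro ε hε
  filter_upwards [h (ε/2) (by linarith)] with n hn
  rw [Real.dist_eq]
  linarith

lemma exp_neg_sub_le {x y : ℝ} (hx : 0 ≤ x) (hxy : x ≤ y) :
    Real.exp (-x) - Real.exp (-y) ≤ y - x := by
  have h1 : Real.exp (-x) ≤ 1 := Real.exp_le_one_iff.2 (by linarith)
  have h2 : Real.exp (x - y) ≤ 1 := Real.exp_le_one_iff.2 (by linarith)
  have h3 : (x - y) + 1 ≤ Real.exp (x - y) := Real.add_one_le_exp _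
  have h4 : Real.exp (-y) = Real.exp (-x) * Real.exp (x - y) := by
    rw [← Real.exp_add]; ring_nf
  have h5 : (0:ℝ) < Real.exp (-x) := Real.exp_pos _
  nlinarith

lemma abs_exp_neg_sub_le {x y : ℝ} (hx : 0 ≤ x) (hy : 0 ≤ y) :
    |Real.exp (-x) - Real.exp (-y)| ≤ |x - y| := by
  rcases le_total x y with h | h
  · rw [abs_of_nonneg (by simp [Real.exp_le_exp]; linarith), abs_of_nonpos (by linarith)]
    linarith [exp_neg_sub_le hx h]
  · rw [abs_of_nonpos (by simp [Real.exp_le_exp]; linarith), abs_of_nonneg (by linarith)]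
    linarith [exp_neg_sub_le hy h]

lemma polya_eq (hα : Summable α) (hαn : ∀ k, 0 ≤ α k) (γ t : ℝ) :
    polyaFun α γ t = Real.exp (-(Fm α γ (t ^ 2 / 4))) := by
  have hu : (0:ℝ) ≤ t ^ 2 / 4 := by positivity
  have hsum : HasSum (fun k => -Real.log (1 + α k * (t ^ 2 / 4)))
      (-∑' k, Real.log (1 + α k * (t ^ 2 / 4))) :=
    (summable_log hα hαn hu).hasSum.neg
  have hprod := hsum.rexp
  have heq : (Real.exp ∘ fun k => -Real.log (1 + α k * (t ^ 2 / 4)))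
      = fun k => (1 + α k * t ^ 2 / 4)⁻¹ := by
    funext k
    simp only [Function.comp_apply, Real.exp_neg,
      Real.exp_log (base_pos hαn hu k), mul_div_assoc]
  rw [heq] at hprod
  rw [polyaFun, hprod.tprod_eq, ← Real.exp_add]
  congr 1
  rw [Fm]
  ring

lemma log_one_add_le_Fm (hα : Summable α) (hαn : ∀ k, 0 ≤ α k) (hγ : 0 ≤ γ) (k : ℕ) :
    Real.log (1 + α k) ≤ Fm α γ 1 := by
  have h1 : Real.log (1 + α k * 1) ≤ ∑' j, Real.log (1 + α j * 1) :=
    Summable.le_tsum (summable_log hα hαn zero_le_one) k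
      (fun j _ => log_term_nonneg hαn zero_le_one j)
  rw [mul_one] at h1
  have h2 : 0 ≤ γ * 1 := by linarith
  unfold Fm
  linarith

lemma atom_le (hα : Summable α) (hαn : ∀ k, 0 ≤ α k) (hγ : 0 ≤ γ) (k : ℕ) :
    1 + α k ≤ Real.exp (Fm α γ 1) := by
  have h := log_one_add_le_Fm hα hαn hγ k
  have hp : (0:ℝ) < 1 + α k := by linarith [hαn k]
  calc 1 + α k = Real.exp (Real.log (1 + α k)) := (Real.exp_log hp).symm
    _ ≤ Real.exp (Fm α γ 1) := Real.exp_le_exp.2 h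

lemma gamma_le_Fm (hα : Summable α) (hαn : ∀ k, 0 ≤ α k) (hγ : 0 ≤ γ) : γ ≤ Fm α γ 1 := by
  have h1 : 0 ≤ ∑' k, Real.log (1 + α k * 1) :=
    tsum_nonneg (log_term_nonneg hαn zero_le_one)
  unfold Fm
  linarith

lemma mass_le (hα : Summable α) (hαn : ∀ k, 0 ≤ α k) (hγ : 0 ≤ γ) :
    γ + ∑' k, α k ≤ (1 + Real.exp (Fm α γ 1)) * Fm α γ 1 := by
  set M := Real.exp (Fm α γ 1) with hM
  have hMpos : 0 < M := Real.exp_pos _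
  have hF : 0 ≤ Fm α γ 1 := Fm_nonneg hα hαn hγ zero_le_one
  have hterm : ∀ k, α k ≤ M * Real.log (1 + α k * 1) := by
    intro k
    have hp : (0:ℝ) < 1 + α k := by linarith [hαn k]
    have h1 : ((1 + α k) - 1) / (1 + α k) ≤ Real.log (1 + α k) - Real.log 1 :=
      (log_div_bounds one_pos (by linarith [hαn k])).1
    rw [Real.log_one] at h1
    have h2 : 1 + α k ≤ M := atom_le hα hαn hγ k
    have h3 : α k / M ≤ α k / (1 + α k) := by
      apply div_le_div_of_nonneg_left (hαn k) hp h2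
    rw [mul_one]
    have h4 : α k / M ≤ Real.log (1 + α k) := by
      have : ((1 + α k) - 1) / (1 + α k) = α k / (1 + α k) := by ring_nf
      linarith [this ▸ h1]
    calc α k = M * (α k / M) := by field_simp
      _ ≤ M * Real.log (1 + α k) := mul_le_mul_of_nonneg_left h4 (le_of_lt hMpos)

  have hsum : ∑' k, α k ≤ ∑' k, M * Real.log (1 + α k * 1) :=
    Summable.tsum_le_tsum hterm hα ((summable_log hα hαn zero_le_one).mul_left M)
  rw [tsum_mul_left] at hsum
  have h5 : ∑' k, Real.log (1 + α k * 1) ≤ Fm α γ 1 := by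
    have h2 : 0 ≤ γ * 1 := by linarith
    unfold Fm; linarith
  have h6 := gamma_le_Fm hα hαn hγ
  nlinarith [mul_le_mul_of_nonneg_left h5 (le_of_lt hMpos)]

end Glue
section Conv

lemma eventually_abs_le_of_tendsto {z : ℕ → ℝ} {L δ : ℝ}
    (h : Tendsto z atTop (nhds L)) (hδ : 0 < δ) : ∀ᶠ n in atTop, |z n - L| ≤ δ := by
  filter_upwards [Metric.tendsto_nhds.1 h δ hδ] with n hn
  rw [Real.dist_eq] at hn
  exact le_of_lt hn

variable {α : ℕ → ℝ} {γ : ℝ}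

lemma Tm_anti (hα : Summable α) (hαn : ∀ k, 0 ≤ α k) {u v : ℝ}
    (hu : 0 ≤ u) (huv : u ≤ v) (m : ℕ) :
    Tm α γ (m + 1) v ≤ Tm α γ (m + 1) u := by
  have h := Tm_slope_lower (γ := γ) hα hαn hu huv m
  have h2 : 0 ≤ ((m:ℝ) + 1) * (v - u) * Um α (m + 1) v := by
    have := Um_nonneg (α := α) hαn (le_trans hu huv) (m + 1)
    have h3 : (0:ℝ) ≤ v - u := by linarith
    positivity
  linarith

lemma Tm_lip (hα : Summable α) (hαn : ∀ k, 0 ≤ α k) {u v : ℝ}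
    (hu : 0 ≤ u) (huv : u ≤ v) (m : ℕ) :
    Tm α γ (m + 1) u - Tm α γ (m + 1) v
      ≤ ((m:ℝ) + 1) * (v - u) * ((∑' k, α k) * (∑' k, α k)) := by
  have h := Tm_slope_upper (γ := γ) hα hαn hu huv m
  refine le_trans h ?_
  apply mul_le_mul_of_nonneg_left (Um_le hα hαn hu (m + 1))
  have h3 : (0:ℝ) ≤ v - u := by linarith
  positivity

variable {a : ℕ → ℕ → ℝ} {g : ℕ → ℝ}

/-- (A): convergence of `F` at nonnegative points implies convergence of `T 1` at
positive points. -/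
lemma T1_tendsto (ha : ∀ n, Summable (a n)) (han : ∀ n k, 0 ≤ a n k)
    (hα : Summable α) (hαn : ∀ k, 0 ≤ α k)
    (hF : ∀ u : ℝ, 0 ≤ u → Tendsto (fun n => Fm (a n) (g n) u) atTop (nhds (Fm α γ u)))
    {u : ℝ} (hu : 0 < u) :
    Tendsto (fun n => Tm (a n) (g n) 1 u) atTop (nhds (Tm α γ 1 u)) := by
  apply tendsto_of_eps
  intro ε hε
  set S2 : ℝ := (∑' k, α k) * (∑' k, α k) with hS2
  have hS2n : 0 ≤ S2 := by
    have : (0:ℝ) ≤ ∑' k, α k := tsum_nonneg hαn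
    positivity
  set h : ℝ := min u (ε / (2 * (S2 + 1))) with hh
  have hhpos : 0 < h := lt_min hu (by positivity)
  have hhu : h ≤ u := min_le_left _ _
  have hhS : h * S2 ≤ ε / 2 := by
    have h1 : h ≤ ε / (2 * (S2 + 1)) := min_le_right _ _
    have h2 : h * S2 ≤ (ε / (2 * (S2 + 1))) * S2 := mul_le_mul_of_nonneg_right h1 hS2n
    have h3 : (ε / (2 * (S2 + 1))) * S2 ≤ ε / 2 := by
      rw [div_mul_eq_mul_div, div_le_div_iff₀ (by positivity) (by norm_num)]
      nlinarith
    linarith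
  set δ : ℝ := ε * h / 8 with hδ
  have hδpos : 0 < δ := by positivity
  have hum : (0:ℝ) ≤ u - h := by linarith
  have e1 := eventually_abs_le_of_tendsto (hF (u - h) hum) hδpos
  have e2 := eventually_abs_le_of_tendsto (hF u (le_of_lt hu)) hδpos
  have e3 := eventually_abs_le_of_tendsto (hF (u + h) (by linarith)) hδpos
  filter_upwards [e1, e2, e3] with n h1 h2 h3
  have hsum_n := ha n
  have hnn := han n
  -- upper bound for `Tm (a n) (g n) 1 u`
  have up1 : h * Tm (a n) (g n) 1 u ≤ Fm (a n) (g n) u - Fm (a n) (g n) (u - h) := by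
    have := Fm_slope_lower (γ := g n) hsum_n hnn hum (by linarith : u - h ≤ u)
    simpa [show u - (u - h) = h by ring] using this
  have up2 : Fm α γ u - Fm α γ (u - h) ≤ h * Tm α γ 1 (u - h) := by
    have := Fm_slope_upper (γ := γ) hα hαn hum (by linarith : u - h ≤ u)
    simpa [show u - (u - h) = h by ring] using this
  have up3 : Tm α γ 1 (u - h) - Tm α γ 1 u ≤ h * S2 := by
    have := Tm_lip (γ := γ) hα hαn hum (by linarith : u - h ≤ u) 0
    simpa [show u - (u - h) = h by ring] using this
  have hup : Tm (a n) (g n) 1 u ≤ Tm α γ 1 u + ε := by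
    have key : h * Tm (a n) (g n) 1 u ≤ h * Tm α γ 1 u + h * (h * S2) + 2 * δ := by
      have habs1 : Fm (a n) (g n) u ≤ Fm α γ u + δ := by
        have := abs_le.1 h2; linarith [this.2]
      have habs2 : Fm α γ (u - h) - δ ≤ Fm (a n) (g n) (u - h) := by
        have := abs_le.1 h1; linarith [this.1]
      nlinarith [up1, up2, up3]
    have h2δ : 2 * δ = h * (ε / 4) := by rw [hδ]; ring
    rw [h2δ] at key
    have key2 : h * Tm (a n) (g n) 1 u ≤ h * (Tm α γ 1 u + ε) := by nlinarith [hhS]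
    exact le_of_mul_le_mul_left (by linarith [key2]) hhpos
  -- lower bound
  have lo1 : Fm (a n) (g n) (u + h) - Fm (a n) (g n) u ≤ h * Tm (a n) (g n) 1 u := by
    have := Fm_slope_upper (γ := g n) hsum_n hnn (le_of_lt hu) (by linarith : u ≤ u + h)
    simpa [show u + h - u = h by ring] using this
  have lo2 : h * Tm α γ 1 (u + h) ≤ Fm α γ (u + h) - Fm α γ u := by
    have := Fm_slope_lower (γ := γ) hα hαn (le_of_lt hu) (by linarith : u ≤ u + h)
    simpa [show u + h - u = h by ring] using this
  have lo3 : Tm α γ 1 u - Tm α γ 1 (u + h) ≤ h * S2 := by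
    have := Tm_lip (γ := γ) hα hαn (le_of_lt hu) (by linarith : u ≤ u + h) 0
    simpa [show u + h - u = h by ring] using this
  have hlo : Tm α γ 1 u - ε ≤ Tm (a n) (g n) 1 u := by
    have key : h * Tm α γ 1 u - h * (h * S2) - 2 * δ ≤ h * Tm (a n) (g n) 1 u := by
      have habs1 : Fm α γ (u + h) - δ ≤ Fm (a n) (g n) (u + h) := by
        have := abs_le.1 h3; linarith [this.1]
      have habs2 : Fm (a n) (g n) u ≤ Fm α γ u + δ := by
        have := abs_le.1 h2; linarith [this.2]
      nlinarith [lo1, lo2, lo3]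
    have h2δ : 2 * δ = h * (ε / 4) := by rw [hδ]; ring
    rw [h2δ] at key
    have key2 : h * (Tm α γ 1 u - ε) ≤ h * Tm (a n) (g n) 1 u := by nlinarith [hhS]
    exact le_of_mul_le_mul_left (by linarith [key2]) hhpos
  rw [abs_le]
  constructor <;> linarith

lemma massfun_mono {x y : ℝ} (hx : 0 ≤ x) (hxy : x ≤ y) :
    (1 + Real.exp x) * x ≤ (1 + Real.exp y) * y := by
  have h1 : Real.exp x ≤ Real.exp y := Real.exp_le_exp.2 hxy
  have h2 : (0:ℝ) < Real.exp x := Real.exp_pos _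
  nlinarith

/-- (B): convergence of the total masses. -/
lemma mass_tendsto (ha : ∀ n, Summable (a n)) (han : ∀ n k, 0 ≤ a n k) (hg : ∀ n, 0 ≤ g n)
    (hα : Summable α) (hαn : ∀ k, 0 ≤ α k) (hγ : 0 ≤ γ)
    (hF : ∀ u : ℝ, 0 ≤ u → Tendsto (fun n => Fm (a n) (g n) u) atTop (nhds (Fm α γ u))) :
    Tendsto (fun n => g n + ∑' k, a n k) atTop (nhds (γ + ∑' k, α k)) := by
  set F1 := Fm α γ 1 with hF1
  have hF1n : 0 ≤ F1 := Fm_nonneg hα hαn hγ zero_le_one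
  set B : ℝ := (1 + Real.exp (F1 + 1)) * (F1 + 1) with hB
  have hBpos : 0 < B := by positivity
  have hmassB : γ + ∑' k, α k ≤ B := by
    refine le_trans (mass_le hα hαn hγ) ?_
    exact massfun_mono hF1n (by linarith)
  apply tendsto_of_eps
  intro ε hε
  set u : ℝ := min 1 (ε / (3 * (B * B + 1))) with hu
  have hupos : 0 < u := lt_min one_pos (by positivity)
  have huB : u * (B * B) ≤ ε / 3 := by
    have h1 : u ≤ ε / (3 * (B * B + 1)) := min_le_right _ _
    have h2 : u * (B * B) ≤ (ε / (3 * (B * B + 1))) * (B * B) :=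
      mul_le_mul_of_nonneg_right h1 (by positivity)
    have h3 : (ε / (3 * (B * B + 1))) * (B * B) ≤ ε / 3 := by
      rw [div_mul_eq_mul_div, div_le_div_iff₀ (by positivity) (by norm_num)]
      nlinarith
    linarith
  have eT1 := eventually_abs_le_of_tendsto
    (T1_tendsto ha han hα hαn hF hupos) (show (0:ℝ) < ε / 3 by linarith)
  have eF1 := eventually_abs_le_of_tendsto (hF 1 zero_le_one) one_pos
  filter_upwards [eT1, eF1] with n h1 h2
  have hFn1 : Fm (a n) (g n) 1 ≤ F1 + 1 := by
    have := abs_le.1 h2; linarith [this.2]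
  have hFn1n : 0 ≤ Fm (a n) (g n) 1 := Fm_nonneg (ha n) (han n) (hg n) zero_le_one
  have hmassn : g n + ∑' k, a n k ≤ B := by
    refine le_trans (mass_le (ha n) (han n) (hg n)) ?_
    exact le_trans (massfun_mono hFn1n hFn1) (le_refl _)
  have hsan : (0:ℝ) ≤ ∑' k, a n k := tsum_nonneg (han n)
  have hsα : (0:ℝ) ≤ ∑' k, α k := tsum_nonneg hαn
  -- mass_n - T1_n(u) = u * Um_n(0, u) ∈ [0, u * B²]
  have hrec_n : Tm (a n) (g n) 1 u = Tm (a n) (g n) 0 u - u * Um (a n) 0 u :=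
    Tm_succ_eq (ha n) (han n) (le_of_lt hupos) 0
  have hrec : Tm α γ 1 u = Tm α γ 0 u - u * Um α 0 u :=
    Tm_succ_eq hα hαn (le_of_lt hupos) 0
  have hUn : 0 ≤ Um (a n) 0 u := Um_nonneg (han n) (le_of_lt hupos) 0
  have hU : 0 ≤ Um α 0 u := Um_nonneg hαn (le_of_lt hupos) 0
  have hUnB : Um (a n) 0 u ≤ B * B := by
    refine le_trans (Um_le (ha n) (han n) (le_of_lt hupos) 0) ?_
    have : ∑' k, a n k ≤ B := by linarith [hg n]
    nlinarith
  have hUB : Um α 0 u ≤ B * B := by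
    refine le_trans (Um_le hα hαn (le_of_lt hupos) 0) ?_
    have : ∑' k, α k ≤ B := by linarith
    nlinarith
  have hm_n : Tm (a n) (g n) 0 u = g n + ∑' k, a n k := mass_eq_Tm_zero
  have hm : Tm α γ 0 u = γ + ∑' k, α k := mass_eq_Tm_zero
  have habs := abs_le.1 h1
  rw [abs_le]
  constructor
  · nlinarith [habs.1, mul_le_mul_of_nonneg_left hUB (le_of_lt hupos), hrec, hrec_n, hm, hm_n,
      mul_nonneg (le_of_lt hupos) hUn]
  · nlinarith [habs.2, mul_le_mul_of_nonneg_left hUnB (le_of_lt hupos), hrec, hrec_n, hm, hm_n,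
      mul_nonneg (le_of_lt hupos) hU]

/-- Auxiliary for (C): convergence of `Um` from convergence of `Tm`. -/
lemma Um_tendsto (ha : ∀ n, Summable (a n)) (han : ∀ n k, 0 ≤ a n k)
    (hα : Summable α) (hαn : ∀ k, 0 ≤ α k) (m : ℕ)
    (hT : ∀ u : ℝ, 0 < u →
      Tendsto (fun n => Tm (a n) (g n) (m + 1) u) atTop (nhds (Tm α γ (m + 1) u)))
    {u : ℝ} (hu : 0 < u) :
    Tendsto (fun n => Um (a n) (m + 1) u) atTop (nhds (Um α (m + 1) u)) := by
  apply tendsto_of_eps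
  intro ε hε
  set S3 : ℝ := (∑' k, α k) * (∑' k, α k) * (∑' k, α k) with hS3
  have hS3n : 0 ≤ S3 := by
    have : (0:ℝ) ≤ ∑' k, α k := tsum_nonneg hαn
    positivity
  set C : ℝ := ((m:ℝ) + 2) * S3 with hC
  have hCn : 0 ≤ C := by positivity
  set h : ℝ := min (u / 2) (ε / (2 * (C + 1))) with hh
  have hhpos : 0 < h := lt_min (by linarith) (by positivity)
  have hhu : h ≤ u / 2 := min_le_left _ _
  have hhC : h * C ≤ ε / 2 := by
    have h1 : h ≤ ε / (2 * (C + 1)) := min_le_right _ _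
    have h2 : h * C ≤ (ε / (2 * (C + 1))) * C := mul_le_mul_of_nonneg_right h1 hCn
    have h3 : (ε / (2 * (C + 1))) * C ≤ ε / 2 := by
      rw [div_mul_eq_mul_div, div_le_div_iff₀ (by positivity) (by norm_num)]
      nlinarith
    linarith
  have hm1 : (0:ℝ) < (m:ℝ) + 1 := by positivity
  set δ : ℝ := ((m:ℝ) + 1) * h * ε / 8 with hδ
  have hδpos : 0 < δ := by positivity
  have humpos : (0:ℝ) < u - h := by linarith
  have hum : (0:ℝ) ≤ u - h := le_of_lt humpos
  have e1 := eventually_abs_le_of_tendsto (hT (u - h) humpos) hδpos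
  have e2 := eventually_abs_le_of_tendsto (hT u hu) hδpos
  have e3 := eventually_abs_le_of_tendsto (hT (u + h) (by linarith)) hδpos
  filter_upwards [e1, e2, e3] with n h1 h2 h3
  have hsum_n := ha n
  have hnn := han n
  -- slope inequalities for index n
  have s1 : ((m:ℝ) + 1) * h * Um (a n) (m + 1) u
      ≤ Tm (a n) (g n) (m + 1) (u - h) - Tm (a n) (g n) (m + 1) u := by
    have := Tm_slope_lower (γ := g n) hsum_n hnn hum (by linarith : u - h ≤ u) m
    simpa [show u - (u - h) = h by ring] using this
  have s2 : Tm (a n) (g n) (m + 1) u - Tm (a n) (g n) (m + 1) (u + h)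
      ≤ ((m:ℝ) + 1) * h * Um (a n) (m + 1) u := by
    have := Tm_slope_upper (γ := g n) hsum_n hnn (le_of_lt hu) (by linarith : u ≤ u + h) m
    simpa [show u + h - u = h by ring] using this
  -- slope inequalities for the limit
  have s3 : Tm α γ (m + 1) (u - h) - Tm α γ (m + 1) u
      ≤ ((m:ℝ) + 1) * h * Um α (m + 1) (u - h) := by
    have := Tm_slope_upper (γ := γ) hα hαn hum (by linarith : u - h ≤ u) m
    simpa [show u - (u - h) = h by ring] using this
  have s3b : Um α (m + 1) (u - h) - Um α (m + 1) u ≤ h * C := by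
    have := Um_lip hα hαn hum (by linarith : u - h ≤ u) (m + 1)
    rw [hC, hS3]
    push_cast at this ⊢
    nlinarith [this]
  have s4 : ((m:ℝ) + 1) * h * Um α (m + 1) (u + h) ≤ Tm α γ (m + 1) u - Tm α γ (m + 1) (u + h) := by
    have := Tm_slope_lower (γ := γ) hα hαn (le_of_lt hu) (by linarith : u ≤ u + h) m
    simpa [show u + h - u = h by ring] using this
  have s4b : Um α (m + 1) u - Um α (m + 1) (u + h) ≤ h * C := by
    have := Um_lip hα hαn (le_of_lt hu) (by linarith : u ≤ u + h) (m + 1)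
    rw [hC, hS3]
    push_cast at this ⊢
    nlinarith [this]
  have habs1 := abs_le.1 h1
  have habs2 := abs_le.1 h2
  have habs3 := abs_le.1 h3
  have h2δ : 2 * δ = ((m:ℝ) + 1) * h * (ε / 4) := by rw [hδ]; ring
  have hKh : 0 < ((m:ℝ) + 1) * h := by positivity
  rw [abs_le]
  have hKh' : (0:ℝ) ≤ ((m:ℝ) + 1) * h := le_of_lt hKh
  constructor
  · -- lower bound for Um_n
    have p1 : ((m:ℝ) + 1) * h * (Um α (m + 1) u - h * C) ≤ ((m:ℝ) + 1) * h * Um α (m + 1) (u + h) :=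
      mul_le_mul_of_nonneg_left (by linarith [s4b]) hKh'
    have p3 : ((m:ℝ) + 1) * h * (ε / 4) ≤ ((m:ℝ) + 1) * h * (ε - h * C) :=
      mul_le_mul_of_nonneg_left (by linarith [hhC]) hKh'
    have key : ((m:ℝ) + 1) * h * (Um α (m + 1) u - ε) ≤ ((m:ℝ) + 1) * h * Um (a n) (m + 1) u := by
      have expand1 : ((m:ℝ) + 1) * h * (Um α (m + 1) u - ε)
          = ((m:ℝ) + 1) * h * (Um α (m + 1) u - h * C) - ((m:ℝ) + 1) * h * (ε - h * C) := by ring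
      rw [expand1]
      linarith [s2, s4, habs2.1, habs3.2, p1, p3, h2δ]
    have := le_of_mul_le_mul_left key hKh
    linarith
  · -- upper bound for Um_n
    have p1 : ((m:ℝ) + 1) * h * Um α (m + 1) (u - h)
        ≤ ((m:ℝ) + 1) * h * (Um α (m + 1) u + h * C) :=
      mul_le_mul_of_nonneg_left (by linarith [s3b]) hKh'
    have p3 : ((m:ℝ) + 1) * h * (ε / 4) ≤ ((m:ℝ) + 1) * h * (ε - h * C) :=
      mul_le_mul_of_nonneg_left (by linarith [hhC]) hKh'
    have key : ((m:ℝ) + 1) * h * Um (a n) (m + 1) u ≤ ((m:ℝ) + 1) * h * (Um α (m + 1) u + ε) := by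
      have expand1 : ((m:ℝ) + 1) * h * (Um α (m + 1) u + ε)
          = ((m:ℝ) + 1) * h * (Um α (m + 1) u + h * C) + ((m:ℝ) + 1) * h * (ε - h * C) := by ring
      rw [expand1]
      linarith [s1, s3, habs1.2, habs2.1, p1, p3, h2δ]
    have := le_of_mul_le_mul_left key hKh
    linarith

/-- (C): convergence of all the transforms `T_{m+1}` at positive points. -/
lemma Tm_tendsto (ha : ∀ n, Summable (a n)) (han : ∀ n k, 0 ≤ a n k)
    (hα : Summable α) (hαn : ∀ k, 0 ≤ α k)
    (hF : ∀ u : ℝ, 0 ≤ u → Tendsto (fun n => Fm (a n) (g n) u) atTop (nhds (Fm α γ u)))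
    (m : ℕ) :
    ∀ u : ℝ, 0 < u →
      Tendsto (fun n => Tm (a n) (g n) (m + 1) u) atTop (nhds (Tm α γ (m + 1) u)) := by
  induction m with
  | zero => exact fun u hu => T1_tendsto ha han hα hαn hF hu
  | succ m ih =>
    intro u hu
    have hU := Um_tendsto ha han hα hαn m ih hu
    have hT := ih u hu
    have heq : ∀ n, Tm (a n) (g n) (m + 2) u
        = Tm (a n) (g n) (m + 1) u - u * Um (a n) (m + 1) u := fun n =>
      Tm_succ_eq (ha n) (han n) (le_of_lt hu) (m + 1)
    have heq' : Tm α γ (m + 2) u = Tm α γ (m + 1) u - u * Um α (m + 1) u :=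
      Tm_succ_eq hα hαn (le_of_lt hu) (m + 1)
    have : Tendsto (fun n => Tm (a n) (g n) (m + 1) u - u * Um (a n) (m + 1) u) atTop
        (nhds (Tm α γ (m + 1) u - u * Um α (m + 1) u)) := hT.sub (hU.const_mul u)
    rw [show m + 1 + 1 = m + 2 from rfl, heq']
    exact this.congr (fun n => (heq n).symm)

/-- (D): convergence of all the transforms at `u = 1` (including the mass, `m = 0`). -/
lemma Tm_tendsto_one (ha : ∀ n, Summable (a n)) (han : ∀ n k, 0 ≤ a n k) (hg : ∀ n, 0 ≤ g n)
    (hα : Summable α) (hαn : ∀ k, 0 ≤ α k) (hγ : 0 ≤ γ)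
    (hF : ∀ u : ℝ, 0 ≤ u → Tendsto (fun n => Fm (a n) (g n) u) atTop (nhds (Fm α γ u)))
    (m : ℕ) :
    Tendsto (fun n => Tm (a n) (g n) m 1) atTop (nhds (Tm α γ m 1)) := by
  cases m with
  | zero =>
    simpa [mass_eq_Tm_zero] using mass_tendsto ha han hg hα hαn hγ hF
  | succ m => exact Tm_tendsto ha han hα hαn hF m 1 one_pos

lemma poly_functional_eq {β : ℕ → ℝ} {δ : ℝ} (hβ : Summable β) (hβn : ∀ k, 0 ≤ β k)
    (p : Polynomial ℝ) :
    δ * Polynomial.eval (1 / (1 + (0:ℝ))) p + ∑' k, β k * Polynomial.eval (1 / (1 + β k)) p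
      = ∑ i ∈ Finset.range (p.natDegree + 1), p.coeff i * Tm β δ i 1 := by
  classical
  set d := p.natDegree + 1 with hd
  have hterm : ∀ k, β k * Polynomial.eval (1 / (1 + β k)) p
      = ∑ i ∈ Finset.range d, p.coeff i * (β k / (1 + β k * 1) ^ i) := by
    intro k
    have hb : (0:ℝ) < 1 + β k := by linarith [hβn k]
    rw [Polynomial.eval_eq_sum_range, Finset.mul_sum]
    apply Finset.sum_congr rfl
    intro i _
    rw [one_div, inv_pow, mul_one]
    field_simp
  have hsummable : ∀ i ∈ Finset.range d, Summable (fun k => p.coeff i * (β k / (1 + β k * 1) ^ i)) :=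
    fun i _ => (summable_frac hβ hβn zero_le_one i).mul_left _
  have hswap : ∑' k, β k * Polynomial.eval (1 / (1 + β k)) p
      = ∑ i ∈ Finset.range d, p.coeff i * ∑' k, β k / (1 + β k * 1) ^ i := by
    rw [tsum_congr hterm, Summable.tsum_finsetSum hsummable]
    apply Finset.sum_congr rfl
    intro i _
    rw [tsum_mul_left]
  rw [hswap]
  have heval0 : Polynomial.eval (1 / (1 + (0:ℝ))) p = ∑ i ∈ Finset.range d, p.coeff i := by
    rw [show (1 : ℝ) / (1 + 0) = 1 by norm_num, Polynomial.eval_eq_sum_range]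
    simp [hd]
  rw [heval0, Finset.mul_sum]
  rw [← Finset.sum_add_distrib]
  apply Finset.sum_congr rfl
  intro i _
  unfold Tm
  ring

/-- (E): weak convergence from convergence of `F` at all nonnegative points. -/
lemma weak_of_hF (ha : ∀ n, Summable (a n)) (han : ∀ n k, 0 ≤ a n k) (hg : ∀ n, 0 ≤ g n)
    (hα : Summable α) (hαn : ∀ k, 0 ≤ α k) (hγ : 0 ≤ γ)
    (hF : ∀ u : ℝ, 0 ≤ u → Tendsto (fun n => Fm (a n) (g n) u) atTop (nhds (Fm α γ u)))
    (f : ℝ → ℝ) (hf : Continuous f) (hfb : ∃ C : ℝ, ∀ x, |f x| ≤ C) :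
    Tendsto (fun n => g n * f 0 + ∑' k, a n k * f (a n k)) atTop
      (nhds (γ * f 0 + ∑' k, α k * f (α k))) := by
  obtain ⟨C, hC⟩ := hfb
  have hC0 : 0 ≤ C := le_trans (abs_nonneg _) (hC 0)
  set F1 := Fm α γ 1 with hF1def
  have hF1n : 0 ≤ F1 := Fm_nonneg hα hαn hγ zero_le_one
  set M : ℝ := Real.exp (F1 + 1) with hM
  have hM1 : 1 ≤ M := Real.one_le_exp (by linarith)
  have hMpos : 0 < M := by linarith
  set B : ℝ := (1 + Real.exp (F1 + 1)) * (F1 + 1) with hB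
  have hBpos : 0 < B := by positivity
  have hmassB : γ + ∑' k, α k ≤ B := by
    refine le_trans (mass_le hα hαn hγ) (massfun_mono hF1n (by linarith))
  have hαM : ∀ k, α k ≤ M := by
    intro k
    have := atom_le hα hαn hγ k
    have h2 : Real.exp F1 ≤ M := by
      rw [hM]; exact Real.exp_le_exp.2 (by linarith)
    linarith
  apply tendsto_of_eps
  intro ε hε
  set ε' : ℝ := ε / (4 * (B + 1)) with hε'
  have hε'pos : 0 < ε' := by positivity
  have hε'B : ε' * B ≤ ε / 4 := by
    rw [hε', div_mul_eq_mul_div, div_le_div_iff₀ (by positivity) (by norm_num)]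
    nlinarith
  -- Weierstrass approximation of f ∘ (y ↦ 1/y - 1) on [1/(1+M), 1]
  have hcont : ContinuousOn (fun y : ℝ => f (1 / y - 1)) (Set.Icc (1 / (1 + M)) 1) := by
    apply hf.comp_continuousOn
    apply ContinuousOn.sub ?_ continuousOn_const
    apply ContinuousOn.div continuousOn_const continuousOn_id
    intro y hy
    have h1 : 1 / (1 + M) ≤ y := hy.1
    have h2 : (0:ℝ) < 1 / (1 + M) := by positivity
    exact ne_of_gt (lt_of_lt_of_le h2 h1)
  obtain ⟨p, hp⟩ := exists_polynomial_near_of_continuousOn (1 / (1 + M)) 1 _ hcont ε' hε'pos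
  have happrox : ∀ x : ℝ, 0 ≤ x → x ≤ M → |Polynomial.eval (1 / (1 + x)) p - f x| ≤ ε' := by
    intro x hx hxM
    have hx1 : (0:ℝ) < 1 + x := by linarith
    have hy : 1 / (1 + x) ∈ Set.Icc (1 / (1 + M)) 1 := by
      constructor
      · apply one_div_le_one_div_of_le hx1 (by linarith)
      · rw [div_le_one hx1]; linarith
    have := hp _ hy
    have hid : 1 / (1 / (1 + x)) - 1 = x := by
      field_simp; ring
    rw [hid] at this
    exact le_of_lt this
  set d := p.natDegree + 1 with hd
  set q : ℝ → ℝ := fun x => Polynomial.eval (1 / (1 + x)) p with hq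
  -- convergence of the approximating functionals
  have hA : Tendsto (fun n => ∑ i ∈ Finset.range d, p.coeff i * Tm (a n) (g n) i 1) atTop
      (nhds (∑ i ∈ Finset.range d, p.coeff i * Tm α γ i 1)) := by
    apply tendsto_finset_sum
    intro i _
    exact (Tm_tendsto_one ha han hg hα hαn hγ hF i).const_mul _
  have eA := eventually_abs_le_of_tendsto hA (show (0:ℝ) < ε / 4 by linarith)
  have eF1 := eventually_abs_le_of_tendsto (hF 1 zero_le_one) one_pos
  filter_upwards [eA, eF1] with n hn1 hn2
  -- bounds for the n-th measure
  have hFn1 : Fm (a n) (g n) 1 ≤ F1 + 1 := by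
    have := abs_le.1 hn2; linarith [this.2]
  have hFn1n : 0 ≤ Fm (a n) (g n) 1 := Fm_nonneg (ha n) (han n) (hg n) zero_le_one
  have hmassn : g n + ∑' k, a n k ≤ B := by
    refine le_trans (mass_le (ha n) (han n) (hg n)) (massfun_mono hFn1n hFn1)
  have haM : ∀ k, a n k ≤ M := by
    intro k
    have := atom_le (ha n) (han n) (hg n) k
    have h2 : Real.exp (Fm (a n) (g n) 1) ≤ M := by
      rw [hM]; exact Real.exp_le_exp.2 hFn1
    linarith
  have hsan : (0:ℝ) ≤ ∑' k, a n k := tsum_nonneg (han n)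
  have hsα : (0:ℝ) ≤ ∑' k, α k := tsum_nonneg hαn
  -- the error estimate for a general parameter
  have herr : ∀ (β : ℕ → ℝ) (δ : ℝ), Summable β → (∀ k, 0 ≤ β k) → 0 ≤ δ → (∀ k, β k ≤ M) →
      |(δ * f 0 + ∑' k, β k * f (β k))
        - (δ * q 0 + ∑' k, β k * q (β k))| ≤ ε' * (δ + ∑' k, β k) := by
    intro β δ hβ hβn hδ hβM
    have hqb : ∀ k, |β k * f (β k) - β k * q (β k)| ≤ ε' * β k := by
      intro k
      rw [← mul_sub, abs_mul, abs_of_nonneg (hβn k)]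
      have := happrox (β k) (hβn k) (hβM k)
      rw [abs_sub_comm] at this
      calc β k * |f (β k) - q (β k)| ≤ β k * ε' := by
            apply mul_le_mul_of_nonneg_left ?_ (hβn k)
            exact this
        _ = ε' * β k := by ring
    have hsf : Summable (fun k => β k * f (β k)) := by
      apply Summable.of_abs
      apply Summable.of_nonneg_of_le (fun k => abs_nonneg _) ?_ (hβ.mul_left C)
      intro k
      rw [abs_mul, abs_of_nonneg (hβn k)]
      calc β k * |f (β k)| ≤ β k * C := mul_le_mul_of_nonneg_left (hC _) (hβn k)
        _ = C * β k := by ring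
    have hsq : Summable (fun k => β k * q (β k)) := by
      apply Summable.of_abs
      apply Summable.of_nonneg_of_le (fun k => abs_nonneg _) ?_ (hβ.mul_left (C + ε'))
      intro k
      have h1 : |q (β k)| ≤ C + ε' := by
        have h2 := happrox (β k) (hβn k) (hβM k)
        have h3 := hC (β k)
        have h4 : |q (β k) - f (β k)| ≤ ε' := h2
        calc |q (β k)| = |(q (β k) - f (β k)) + f (β k)| := by ring_nf
          _ ≤ |q (β k) - f (β k)| + |f (β k)| := abs_add_le _ _
          _ ≤ C + ε' := by linarith
      rw [abs_mul, abs_of_nonneg (hβn k)]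
      calc β k * |q (β k)| ≤ β k * (C + ε') := mul_le_mul_of_nonneg_left h1 (hβn k)
        _ = (C + ε') * β k := by ring
    have htsum : |∑' k, β k * f (β k) - ∑' k, β k * q (β k)| ≤ ε' * ∑' k, β k := by
      rw [← Summable.tsum_sub hsf hsq]
      have h1 : ‖∑' k, (β k * f (β k) - β k * q (β k))‖
          ≤ ∑' k, ‖β k * f (β k) - β k * q (β k)‖ := by
        apply norm_tsum_le_tsum_norm
        apply Summable.of_nonneg_of_le (fun k => norm_nonneg _) ?_ (hβ.mul_left ε')
        intro k
        rw [Real.norm_eq_abs]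
        exact hqb k
      rw [Real.norm_eq_abs] at h1
      refine le_trans h1 ?_
      calc ∑' k, ‖β k * f (β k) - β k * q (β k)‖ ≤ ∑' k, ε' * β k := by
            apply Summable.tsum_le_tsum ?_ ?_ (hβ.mul_left ε')
            · intro k; rw [Real.norm_eq_abs]; exact hqb k
            · apply Summable.of_nonneg_of_le (fun k => norm_nonneg _) ?_ (hβ.mul_left ε')
              intro k; rw [Real.norm_eq_abs]; exact hqb k
        _ = ε' * ∑' k, β k := tsum_mul_left
    have h0 : |δ * f 0 - δ * q 0| ≤ ε' * δ := by
      rw [← mul_sub, abs_mul, abs_of_nonneg hδ]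
      have := happrox 0 (le_refl 0) (by linarith)
      rw [abs_sub_comm] at this
      calc δ * |f 0 - q 0| ≤ δ * ε' := mul_le_mul_of_nonneg_left this hδ
        _ = ε' * δ := by ring
    calc |(δ * f 0 + ∑' k, β k * f (β k)) - (δ * q 0 + ∑' k, β k * q (β k))|
        = |(δ * f 0 - δ * q 0) + (∑' k, β k * f (β k) - ∑' k, β k * q (β k))| := by ring_nf
      _ ≤ |δ * f 0 - δ * q 0| + |∑' k, β k * f (β k) - ∑' k, β k * q (β k)| := abs_add_le _ _
      _ ≤ ε' * δ + ε' * ∑' k, β k := add_le_add h0 htsum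
      _ = ε' * (δ + ∑' k, β k) := by ring
  -- assemble
  have herr_n := herr (a n) (g n) (ha n) (han n) (hg n) haM
  have herr_lim := herr α γ hα hαn hγ hαM
  have hqn : g n * q 0 + ∑' k, a n k * q (a n k)
      = ∑ i ∈ Finset.range d, p.coeff i * Tm (a n) (g n) i 1 := by
    have := poly_functional_eq (δ := g n) (ha n) (han n) p
    simpa [hq] using this
  have hqlim : γ * q 0 + ∑' k, α k * q (α k)
      = ∑ i ∈ Finset.range d, p.coeff i * Tm α γ i 1 := by
    have := poly_functional_eq (δ := γ) hα hαn p
    simpa [hq] using this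
  have e1 : |(g n * f 0 + ∑' k, a n k * f (a n k))
      - (g n * q 0 + ∑' k, a n k * q (a n k))| ≤ ε / 4 := by
    refine le_trans herr_n ?_
    refine le_trans ?_ hε'B
    exact mul_le_mul_of_nonneg_left hmassn (le_of_lt hε'pos)
  have e2 : |(γ * f 0 + ∑' k, α k * f (α k)) - (γ * q 0 + ∑' k, α k * q (α k))| ≤ ε / 4 := by
    refine le_trans herr_lim ?_
    refine le_trans ?_ hε'B
    exact mul_le_mul_of_nonneg_left hmassB (le_of_lt hε'pos)
  rw [hqn] at e1
  rw [hqlim] at e2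
  have := abs_le.1 hn1
  have h1 := abs_le.1 e1
  have h2 := abs_le.1 e2
  rw [abs_le]
  constructor <;> linarith [this.1, this.2, h1.1, h1.2, h2.1, h2.2]
/-- (F): the weak-convergence hypothesis gives pointwise convergence of `F`. -/
lemma hF_of_weak (ha : ∀ n, Summable (a n)) (han : ∀ n k, 0 ≤ a n k) (hg : ∀ n, 0 ≤ g n)
    (hα : Summable α) (hαn : ∀ k, 0 ≤ α k) (hγ : 0 ≤ γ)
    (hweak : ∀ f : ℝ → ℝ, Continuous f → (∃ C : ℝ, ∀ x, |f x| ≤ C) →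
        Tendsto (fun n => g n * f 0 + ∑' k, a n k * f (a n k)) atTop
          (nhds (γ * f 0 + ∑' k, α k * f (α k)))) :
    ∀ u : ℝ, 0 ≤ u → Tendsto (fun n => Fm (a n) (g n) u) atTop (nhds (Fm α γ u)) := by
  intro u hu
  set f : ℝ → ℝ := fun x => if x ≤ 0 then u else Real.log (1 + x * u) / x with hfdef
  have hf0 : f 0 = u := by simp [hfdef]
  have hval : ∀ (β : ℕ → ℝ), (∀ k, 0 ≤ β k) → ∀ k,
      β k * f (β k) = Real.log (1 + β k * u) := by
    intro β hβn k
    rcases eq_or_lt_of_le (hβn k) with h | h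
    · rw [← h]; simp [hfdef]
    · rw [hfdef]
      simp only
      rw [if_neg (not_le.2 h)]
      field_simp
  -- continuity of the test function
  have hL : HasDerivAt (fun x : ℝ => Real.log (1 + x * u)) u 0 := by
    have h1 : HasDerivAt (fun x : ℝ => 1 + x * u) u 0 := by
      simpa using ((hasDerivAt_id (0:ℝ)).mul_const u).const_add 1
    have h2 := h1.log (by norm_num : (1:ℝ) + 0 * u ≠ 0)
    simpa using h2
  have hslope : Tendsto (fun x => Real.log (1 + x * u) / x)
      (nhdsWithin (0:ℝ) (Set.Ioi 0)) (nhds u) := by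
    have h3 := hasDerivAt_iff_tendsto_slope.1 hL
    have h4 : nhdsWithin (0:ℝ) (Set.Ioi 0) ≤ nhdsWithin (0:ℝ) {(0:ℝ)}ᶜ :=
      nhdsWithin_mono 0 (fun x hx => ne_of_gt hx)
    apply (h3.mono_left h4).congr'
    filter_upwards [self_mem_nhdsWithin] with x hx
    have hx0 : x ≠ 0 := ne_of_gt hx
    rw [slope_def_field]
    simp [div_eq_div_iff, hx0]
  have hcont : Continuous f := by
    rw [continuous_iff_continuousAt]
    intro x
    rcases lt_trichotomy x 0 with hx | hx | hx
    · have heq : f =ᶠ[nhds x] fun _ => u := by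
        filter_upwards [Iio_mem_nhds hx] with y hy
        simp [hfdef, le_of_lt (Set.mem_Iio.1 hy)]
      exact ContinuousAt.congr continuousAt_const heq.symm
    · subst hx
      unfold ContinuousAt
      rw [hf0, ← nhdsLE_sup_nhdsGT (0:ℝ), tendsto_sup]
      constructor
      · apply tendsto_const_nhds.congr'
        filter_upwards [self_mem_nhdsWithin] with y (hy : y ≤ 0)
        simp [hfdef, hy]
      · apply hslope.congr'
        filter_upwards [self_mem_nhdsWithin] with y (hy : y ∈ Set.Ioi (0:ℝ))
        simp [hfdef, not_le.2 (Set.mem_Ioi.1 hy)]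
    · have hb : (0:ℝ) < 1 + x * u := by nlinarith
      have hcx : ContinuousAt (fun y => Real.log (1 + y * u) / y) x := by
        apply ContinuousAt.div ?_ continuousAt_id (ne_of_gt hx)
        exact ContinuousAt.log (by fun_prop : ContinuousAt (fun y : ℝ => 1 + y * u) x)
          (ne_of_gt hb)
      apply ContinuousAt.congr hcx
      filter_upwards [Ioi_mem_nhds hx] with y (hy : 0 < y)
      simp [hfdef, not_le.2 hy]
  have hbd : ∀ x, |f x| ≤ u := by
    intro x
    rw [hfdef]
    simp only
    split_ifs with h
    · rw [abs_of_nonneg hu]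
    · push_neg at h
      have hb : (0:ℝ) < 1 + x * u := by nlinarith
      have h1 : Real.log (1 + x * u) ≤ x * u := by
        have := Real.log_le_sub_one_of_pos hb
        linarith
      have h2 : 0 ≤ Real.log (1 + x * u) := Real.log_nonneg (by nlinarith)
      rw [abs_of_nonneg (div_nonneg h2 (le_of_lt h))]
      rw [div_le_iff₀ h]
      linarith [h1]
  have := hweak f hcont ⟨u, hbd⟩
  rw [hf0] at this
  have hlim : γ * u + ∑' k, α k * f (α k) = Fm α γ u := by
    rw [tsum_congr (hval α hαn)]; rfl
  rw [hlim] at this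
  apply this.congr
  intro n
  rw [tsum_congr (hval (a n) (han n))]
  rfl

/-- (G): uniform convergence on compacts from pointwise convergence of `F` plus mass
convergence. -/
lemma unif_of_hF (ha : ∀ n, Summable (a n)) (han : ∀ n k, 0 ≤ a n k) (hg : ∀ n, 0 ≤ g n)
    (hα : Summable α) (hαn : ∀ k, 0 ≤ α k) (hγ : 0 ≤ γ)
    (hF : ∀ u : ℝ, 0 ≤ u → Tendsto (fun n => Fm (a n) (g n) u) atTop (nhds (Fm α γ u)))
    (hmass : Tendsto (fun n => g n + ∑' k, a n k) atTop (nhds (γ + ∑' k, α k)))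
    (K : Set ℝ) (hK : IsCompact K) :
    TendstoUniformlyOn (fun n t => polyaFun (a n) (g n) t) (polyaFun α γ) atTop K := by
  obtain ⟨R, hR⟩ := hK.isBounded.subset_closedBall 0
  set R' : ℝ := max R 0 with hR'
  have hRK : ∀ t ∈ K, |t| ≤ R' := by
    intro t ht
    have := hR ht
    rw [Metric.mem_closedBall, Real.dist_eq, sub_zero] at this
    exact le_trans this (le_max_left _ _)
  set U : ℝ := R' ^ 2 / 4 with hU
  have hUn : 0 ≤ U := by positivity
  rw [Metric.tendstoUniformlyOn_iff]
  intro ε hε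
  set B : ℝ := γ + (∑' k, α k) + 1 with hB
  have hsα : (0:ℝ) ≤ ∑' k, α k := tsum_nonneg hαn
  have hBpos : 0 < B := by positivity
  have hmassB : γ + ∑' k, α k ≤ B := by linarith
  have eB : ∀ᶠ n in atTop, g n + ∑' k, a n k ≤ B := by
    filter_upwards [eventually_abs_le_of_tendsto hmass one_pos] with n hn
    have := abs_le.1 hn
    linarith [this.2]
  set δ : ℝ := ε / (4 * (B + 1)) with hδ
  have hδpos : 0 < δ := by positivity
  have hδB : δ * B ≤ ε / 4 := by
    rw [hδ, div_mul_eq_mul_div, div_le_div_iff₀ (by positivity) (by norm_num)]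
    nlinarith
  set N : ℕ := ⌈U / δ⌉₊ with hN
  have eGrid : ∀ᶠ n in atTop, ∀ i ∈ Finset.range (N + 1),
      |Fm (a n) (g n) ((i : ℝ) * δ) - Fm α γ ((i : ℝ) * δ)| ≤ ε / 4 := by
    rw [eventually_all_finset]
    intro i _
    exact eventually_abs_le_of_tendsto (hF ((i : ℝ) * δ) (by positivity)) (by linarith)
  filter_upwards [eGrid, eB] with n hn hb
  intro t ht
  set u : ℝ := t ^ 2 / 4 with hudef
  have hu : 0 ≤ u := by positivity
  have huU : u ≤ U := by
    rw [hudef, hU]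
    have h1 : t ^ 2 ≤ R' ^ 2 := by
      rw [← sq_abs t]
      apply pow_le_pow_left₀ (abs_nonneg t) (hRK t ht)
    linarith
  set i : ℕ := ⌊u / δ⌋₊ with hi
  have hiN : i ∈ Finset.range (N + 1) := by
    rw [Finset.mem_range, Nat.lt_succ_iff]
    have h1 : (i : ℝ) ≤ u / δ := Nat.floor_le (by positivity)
    have h2 : u / δ ≤ U / δ := by gcongr
    have h3 : U / δ ≤ (N : ℝ) := Nat.le_ceil _
    exact_mod_cast le_trans h1 (le_trans h2 h3)
  set w : ℝ := (i : ℝ) * δ with hw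
  have hwn : 0 ≤ w := by positivity
  have hwu : w ≤ u := by
    rw [hw]
    have h1 : (i : ℝ) ≤ u / δ := Nat.floor_le (by positivity)
    calc (i : ℝ) * δ ≤ (u / δ) * δ := mul_le_mul_of_nonneg_right h1 (le_of_lt hδpos)
      _ = u := by field_simp
  have huw : u - w ≤ δ := by
    have h1 : u / δ < (i : ℝ) + 1 := Nat.lt_floor_add_one _
    have h2 : u < ((i : ℝ) + 1) * δ := by
      calc u = (u / δ) * δ := by field_simp
        _ < ((i : ℝ) + 1) * δ := by
          apply mul_lt_mul_of_pos_right h1 hδpos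
    rw [hw]; linarith
  -- sandwich for F_n and F between w and u
  have d1 : 0 ≤ Fm (a n) (g n) u - Fm (a n) (g n) w ∧
      Fm (a n) (g n) u - Fm (a n) (g n) w ≤ δ * B := by
    constructor
    · have h1 := Fm_slope_lower (γ := g n) (ha n) (han n) hwn hwu
      have h2 : 0 ≤ (u - w) * Tm (a n) (g n) 1 u := by
        apply mul_nonneg (by linarith) (Tm_nonneg (ha n) (han n) (hg n) hu 1)
      linarith
    · have h1 := Fm_slope_upper (γ := g n) (ha n) (han n) hwn hwu
      have h2 : Tm (a n) (g n) 1 w ≤ B := le_trans (Tm_le_mass (ha n) (han n) hwn 1) hb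
      have h3 : (u - w) * Tm (a n) (g n) 1 w ≤ δ * B := by
        apply mul_le_mul huw h2 (Tm_nonneg (ha n) (han n) (hg n) hwn 1) (le_of_lt hδpos)
      linarith
  have d2 : 0 ≤ Fm α γ u - Fm α γ w ∧ Fm α γ u - Fm α γ w ≤ δ * B := by
    constructor
    · have h1 := Fm_slope_lower (γ := γ) hα hαn hwn hwu
      have h2 : 0 ≤ (u - w) * Tm α γ 1 u := by
        apply mul_nonneg (by linarith) (Tm_nonneg hα hαn hγ hu 1)
      linarith
    · have h1 := Fm_slope_upper (γ := γ) hα hαn hwn hwu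
      have h2 : Tm α γ 1 w ≤ B := le_trans (Tm_le_mass hα hαn hwn 1) hmassB
      have h3 : (u - w) * Tm α γ 1 w ≤ δ * B := by
        apply mul_le_mul huw h2 (Tm_nonneg hα hαn hγ hwn 1) (le_of_lt hδpos)
      linarith
  have hgrid := hn i hiN
  rw [← hw] at hgrid
  have hFdiff2 : ∀ Fau Faw Fnu Fnw dd BB e : ℝ, 0 < e →
      0 ≤ Fnu - Fnw → Fnu - Fnw ≤ dd * BB → 0 ≤ Fau - Faw → Fau - Faw ≤ dd * BB →
      |Fnw - Faw| ≤ e/4 → dd * BB ≤ e/4 → |Fau - Fnu| ≤ 3 * (e/4) := by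
    intro Fau Faw Fnu Fnw dd BB e he q1 q2 q3 q4 q5 q6
    have q7 := abs_le.1 q5
    rw [abs_le]
    constructor
    · linarith [q7.1, q7.2]
    · linarith [q7.1, q7.2]
  have hFdiff : |Fm α γ u - Fm (a n) (g n) u| ≤ 3 * (ε / 4) := by
    exact hFdiff2 _ _ _ _ _ _ _ hε d1.1 d1.2 d2.1 d2.2 hgrid hδB
  rw [Real.dist_eq, polya_eq hα hαn γ t, polya_eq (ha n) (han n) (g n) t]
  have h5 := abs_exp_neg_sub_le (Fm_nonneg hα hαn hγ hu) (Fm_nonneg (ha n) (han n) (hg n) hu)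
  calc |Real.exp (-(Fm α γ (t ^ 2 / 4))) - Real.exp (-(Fm (a n) (g n) (t ^ 2 / 4)))|
      ≤ |Fm α γ (t ^ 2 / 4) - Fm (a n) (g n) (t ^ 2 / 4)| := h5
    _ ≤ 3 * (ε / 4) := hFdiff
    _ < ε := by linarith
/-- (H): uniform convergence on compacts gives pointwise convergence of `F`. -/
lemma hF_of_unif (ha : ∀ n, Summable (a n)) (han : ∀ n k, 0 ≤ a n k)
    (hα : Summable α) (hαn : ∀ k, 0 ≤ α k)
    (hunif : ∀ K : Set ℝ, IsCompact K →
      TendstoUniformlyOn (fun n t => polyaFun (a n) (g n) t) (polyaFun α γ) atTop K) :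
    ∀ u : ℝ, 0 ≤ u → Tendsto (fun n => Fm (a n) (g n) u) atTop (nhds (Fm α γ u)) := by
  intro u hu
  set t : ℝ := 2 * Real.sqrt u with htdef
  have ht : t ^ 2 / 4 = u := by
    rw [htdef, mul_pow, Real.sq_sqrt hu]
    ring
  have hpt : Tendsto (fun n => polyaFun (a n) (g n) t) atTop (nhds (polyaFun α γ t)) :=
    (hunif {t} isCompact_singleton).tendsto_at (Set.mem_singleton t)
  have e1 : ∀ n, polyaFun (a n) (g n) t = Real.exp (-(Fm (a n) (g n) u)) := fun n => by
    rw [polya_eq (ha n) (han n), ht]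
  have e2 : polyaFun α γ t = Real.exp (-(Fm α γ u)) := by
    rw [polya_eq hα hαn, ht]
  rw [e2] at hpt
  have hpt2 : Tendsto (fun n => Real.exp (-(Fm (a n) (g n) u))) atTop
      (nhds (Real.exp (-(Fm α γ u)))) := hpt.congr e1
  have hlog : Tendsto (fun n => -Real.log (Real.exp (-(Fm (a n) (g n) u)))) atTop
      (nhds (-Real.log (Real.exp (-(Fm α γ u))))) :=
    (((Real.continuousAt_log (ne_of_gt (Real.exp_pos _))).tendsto.comp hpt2)).neg
  simpa [Real.log_exp] using hlog

end Conv
end PolyaStmt14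

open PolyaStmt14

/-- For a sequence of parameters `ω⁽ⁿ⁾ = (a n, g n)` and a parameter
`ω = (α, γ)` (all with summable nonnegative sequences and nonnegative `γ`-part), the
following are equivalent:
(a) weak convergence of the measures `σ_{ω⁽ⁿ⁾}` to `σ_ω`, i.e. for every bounded continuous
`f`, `g n · f(0) + Σ_k (a n k) f(a n k) → γ f(0) + Σ_k α_k f(α_k)`;
(b) `Π(ω⁽ⁿ⁾,·) → Π(ω,·)` uniformly on every compact subset of `ℝ`. -/
theorem polya_topologies_equivalent
    (a : ℕ → ℕ → ℝ) (g : ℕ → ℝ) (α : ℕ → ℝ) (γ : ℝ)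
    (ha : ∀ n, Summable (a n)) (han : ∀ n k, 0 ≤ a n k) (hg : ∀ n, 0 ≤ g n)
    (hα : Summable α) (hαn : ∀ k, 0 ≤ α k) (hγ : 0 ≤ γ) :
    (∀ f : ℝ → ℝ, Continuous f → (∃ C : ℝ, ∀ x, |f x| ≤ C) →
        Tendsto (fun n => g n * f 0 + ∑' k, a n k * f (a n k)) atTop
          (nhds (γ * f 0 + ∑' k, α k * f (α k))))
      ↔ (∀ K : Set ℝ, IsCompact K →
          TendstoUniformlyOn (fun n t => polyaFun (a n) (g n) t) (polyaFun α γ) atTop K) := by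
  constructor
  · intro hweak
    have hF := hF_of_weak ha han hg hα hαn hγ hweak
    have hmass : Tendsto (fun n => g n + ∑' k, a n k) atTop (nhds (γ + ∑' k, α k)) := by
      have := hweak (fun _ => 1) continuous_const ⟨1, fun x => by norm_num⟩
      simpa using this
    exact fun K hK => unif_of_hF ha han hg hα hαn hγ hF hmass K hK
  · intro hunif
    have hF := hF_of_unif ha han hα hαn hunif
    intro f hf hfb
    exact weak_of_hF ha han hg hα hαn hγ hF f hf hfb
end

section
/- Let R ≥ 0 and let Ω_R be the set of parameters ω = (α, γ) with α = (α_j)_{j≥1} a summable sequence of nonnegative reals and γ ≥ 0 satisfying γ + Σ_{j=1}^∞ α_j ≤ R. Then Ω_R is compact in the following sense: every sequence (ω⁽ⁿ⁾) in Ω_R has a subsequence (ω⁽ⁿᵏ⁾) and a parameter ω ∈ Ω_R such that the finite measures σ_{ω⁽ⁿᵏ⁾} = γ⁽ⁿᵏ⁾δ₀ + Σ_j α_j⁽ⁿᵏ⁾ δ_{α_j⁽ⁿᵏ⁾} converge weakly on [0,∞) to σ_ω = γδ₀ + Σ_j α_j δ_{α_j}, i.e. ∫ f dσ_{ω⁽ⁿᵏ⁾}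 → ∫ f dσ_ω for every bounded continuous function f on [0,∞). -/
open Filter

section sort

variable {a : ℕ → ℝ}

private lemma exists_argmax (ha : Summable a) (h0 : ∀ i, 0 ≤ a i) (t : Finset ℕ) :
    ∃ i, i ∉ t ∧ ∀ i', i' ∉ t → a i' ≤ a i := by
  by_cases h : ∀ i ∉ t, a i = 0
  · obtain ⟨i, hi⟩ := t.exists_notMem
    exact ⟨i, hi, fun i' hi' => by rw [h i' hi', h i hi]⟩
  · push_neg at h
    obtain ⟨i₀, hi₀t, hi₀⟩ := h
    have hi₀pos : 0 < a i₀ := lt_of_le_of_ne (h0 i₀) (Ne.symm hi₀)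
    have hev : ∀ᶠ i in atTop, a i < a i₀ :=
      ha.tendsto_atTop_zero.eventually_lt_const hi₀pos
    obtain ⟨m, hm⟩ := eventually_atTop.1 hev
    have hfin : {i | a i₀ ≤ a i}.Finite := by
      apply (Set.finite_Iio m).subset
      intro i hi
      by_contra hc
      exact absurd (hm i (not_lt.1 hc)) (not_lt.2 hi)
    set s := hfin.toFinset.filter (fun i => i ∉ t) with hs
    have hi₀s : i₀ ∈ s := by
      simp [hs, hfin]
      exact hi₀t
    obtain ⟨i, his, hmax⟩ := s.exists_max_image a ⟨i₀, hi₀s⟩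
    have hit : i ∉ t := (Finset.mem_filter.1 his).2
    refine ⟨i, hit, fun i' hi' => ?_⟩
    by_cases h' : a i₀ ≤ a i'
    · exact hmax i' (by simp [hs, hfin]; exact ⟨h', hi'⟩)
    · exact le_trans (le_of_lt (not_le.1 h')) (hmax i₀ hi₀s)

private lemma exists_rearrangement (ha : Summable a) (h0 : ∀ i, 0 ≤ a i) :
    ∃ e : ℕ → ℕ, Function.Injective e ∧ (∀ m n, m ≤ n → a (e n) ≤ a (e m)) ∧
      (∀ i, a i ≠ 0 → i ∈ Set.range e) := by
  classical
  let pick : Finset ℕ → ℕ := fun t => (exists_argmax ha h0 t).choose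
  have hpick : ∀ t : Finset ℕ, pick t ∉ t ∧ ∀ i', i' ∉ t → a i' ≤ a (pick t) :=
    fun t => (exists_argmax ha h0 t).choose_spec
  let chosen : ℕ → Finset ℕ := fun n => Nat.rec ∅ (fun _ t => insert (pick t) t) n
  have hchosen_succ : ∀ n, chosen (n + 1) = insert (pick (chosen n)) (chosen n) := fun n => rfl
  let e : ℕ → ℕ := fun n => pick (chosen n)
  have hmono : ∀ m n, m ≤ n → chosen m ⊆ chosen n := by
    intro m n hmn
    induction hmn with
    | refl => exact subset_rfl
    | step h ih => exact ih.trans (by rw [hchosen_succ]; exact Finset.subset_insert _ _)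
  have hmem : ∀ m n, m < n → e m ∈ chosen n := by
    intro m n hmn
    have : e m ∈ chosen (m + 1) := by rw [hchosen_succ]; exact Finset.mem_insert_self _ _
    exact hmono (m+1) n hmn this
  have hnotmem : ∀ n, e n ∉ chosen n := fun n => (hpick (chosen n)).1
  have hinj : Function.Injective e := by
    intro m n hmn
    by_contra hne
    rcases lt_or_gt_of_ne hne with h | h
    · exact hnotmem n (hmn ▸ hmem m n h)
    · exact hnotmem m (hmn ▸ hmem n m h)
  have hanti : ∀ m n, m ≤ n → a (e n) ≤ a (e m) := by
    intro m n hmn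
    rcases eq_or_lt_of_le hmn with h | h
    · subst h; exact le_refl _
    · have hen : e n ∉ chosen m := fun hc => hnotmem n (hmono m n (le_of_lt h) hc)
      exact (hpick (chosen m)).2 (e n) hen
  have hcov : ∀ i, a i ≠ 0 → i ∈ Set.range e := by
    intro i hai
    by_contra hir
    have hpos : 0 < a i := lt_of_le_of_ne (h0 i) (Ne.symm hai)
    have hinotin : ∀ n, i ∉ chosen n := by
      intro n
      induction n with
      | zero => simp [chosen]
      | succ k ih =>
        rw [hchosen_succ]
        intro hc
        rcases Finset.mem_insert.1 hc with h | h
        · exact hir ⟨k, h.symm⟩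
        · exact ih h
    have hle : ∀ n, a i ≤ a (e n) := fun n => (hpick (chosen n)).2 i (hinotin n)
    obtain ⟨n, hn⟩ := exists_nat_gt ((∑' j, a j) / a i)
    have h1 : (n : ℝ) * a i ≤ ∑ m ∈ Finset.range n, a (e m) := by
      calc (n : ℝ) * a i = ∑ _m ∈ Finset.range n, a i := by
            rw [Finset.sum_const, Finset.card_range, nsmul_eq_mul]
        _ ≤ _ := Finset.sum_le_sum (fun m _ => hle m)
    have h2 : ∑ m ∈ Finset.range n, a (e m) ≤ ∑' j, a j := by
      rw [← Finset.sum_image (f := a) (g := e)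
        (fun x _ y _ hxy => hinj hxy)]
      exact Summable.sum_le_tsum _ (fun i _ => h0 i) ha
    have := ((div_lt_iff₀ hpos).1 hn)
    linarith
  exact ⟨e, hinj, hanti, hcov⟩

end sort


private lemma summable_mul_f {C : ℝ} (c : ℕ → ℝ) (hc : Summable c) (hc0 : ∀ j, 0 ≤ c j)
    (f : ℝ → ℝ) (hC : ∀ x, |f x| ≤ C) : Summable (fun j => c j * f (c j)) := by
  apply Summable.of_norm_bounded (hc.mul_right C)
  intro j
  rw [Real.norm_eq_abs, abs_mul, abs_of_nonneg (hc0 j)]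
  exact mul_le_mul_of_nonneg_left (hC _) (hc0 j)

private lemma tail_est {R C : ℝ} (c : ℕ → ℝ) (hc : Summable c) (hc0 : ∀ j, 0 ≤ c j)
    (hcR : ∑' j, c j ≤ R) (f : ℝ → ℝ) (hC : ∀ x, |f x| ≤ C) {ε' : ℝ} (hε' : 0 ≤ ε')
    (hsmall : ∀ j, |f (c j) - f 0| ≤ ε') :
    |(∑' j, c j * f (c j)) - (∑' j, c j) * f 0| ≤ ε' * R := by
  have hsum1 : Summable (fun j => c j * f (c j)) := summable_mul_f c hc hc0 f hC
  have hsum2 : Summable (fun j => c j * f 0) := hc.mul_right _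
  have hbnd : ∀ j, |c j * f (c j) - c j * f 0| ≤ c j * ε' := by
    intro j
    rw [← mul_sub, abs_mul, abs_of_nonneg (hc0 j)]
    exact mul_le_mul_of_nonneg_left (hsmall j) (hc0 j)
  have habs : Summable (fun j => |c j * f (c j) - c j * f 0|) :=
    Summable.of_nonneg_of_le (fun j => abs_nonneg _) hbnd (hc.mul_right ε')
  calc |(∑' j, c j * f (c j)) - (∑' j, c j) * f 0|
      = |∑' j, (c j * f (c j) - c j * f 0)| := by
        have h1 : (∑' j, c j) * f 0 = ∑' j, c j * f 0 := (hc.tsum_mul_right (f 0)).symm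
        rw [h1, ← Summable.tsum_sub hsum1 hsum2]
    _ ≤ ∑' j, |c j * f (c j) - c j * f 0| := by
        have habs' : Summable (fun j => ‖c j * f (c j) - c j * f 0‖) := by
          simpa [Real.norm_eq_abs] using habs
        simpa [Real.norm_eq_abs] using norm_tsum_le_tsum_norm habs'
    _ ≤ ∑' j, c j * ε' := Summable.tsum_le_tsum hbnd habs (hc.mul_right ε')
    _ = (∑' j, c j) * ε' := hc.tsum_mul_right ε'
    _ ≤ R * ε' := mul_le_mul_of_nonneg_right hcR hε'
    _ = ε' * R := mul_comm _ _


/-- For `R ≥ 0`, the set `Ω_R` of parameters `ω = (α,γ)` (with `α` a summable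
sequence of nonnegative reals, `γ ≥ 0`) satisfying `γ + Σ_j α_j ≤ R` is sequentially compact
for the weak topology of the associated measures `σ_ω = γδ₀ + Σ_j α_j δ_{α_j}`: every sequence
in `Ω_R` has a subsequence whose associated measures converge weakly to `σ_ω` for some
`ω ∈ Ω_R`. -/
theorem polya_parameter_ball_compact
    (R : ℝ) (hR : 0 ≤ R) (a : ℕ → ℕ → ℝ) (g : ℕ → ℝ)
    (ha : ∀ n, Summable (a n)) (han : ∀ n k, 0 ≤ a n k) (hg : ∀ n, 0 ≤ g n)
    (hbound : ∀ n, g n + ∑' k, a n k ≤ R) :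
    ∃ φ : ℕ → ℕ, StrictMono φ ∧
      ∃ (α : ℕ → ℝ) (γ : ℝ), Summable α ∧ (∀ k, 0 ≤ α k) ∧ 0 ≤ γ ∧
        γ + ∑' k, α k ≤ R ∧
        ∀ f : ℝ → ℝ, Continuous f → (∃ C : ℝ, ∀ x, |f x| ≤ C) →
          Tendsto (fun k => g (φ k) * f 0 + ∑' j, a (φ k) j * f (a (φ k) j)) atTop
            (nhds (γ * f 0 + ∑' j, α j * f (α j))) := by
  classical
  choose e he1 he2 he3 using fun n => exists_rearrangement (ha n) (han n)
  set b : ℕ → ℕ → ℝ := fun n j => a n (e n j) with hbdef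
  have hb0 : ∀ n j, 0 ≤ b n j := fun n j => han n _
  have hbsummable : ∀ n, Summable (b n) := fun n => (ha n).comp_injective (he1 n)
  have hbF : ∀ (n : ℕ) (F : ℝ → ℝ), F 0 = 0 → ∑' j, F (b n j) = ∑' i, F (a n i) := by
    intro n F hF
    refine Function.Injective.tsum_eq (he1 n) (f := fun i => F (a n i)) ?_
    intro i hi
    exact he3 n i (fun h => (Function.mem_support.mp hi) (by simp only [h, hF]))
  have hbsum : ∀ n, ∑' j, b n j = ∑' i, a n i := fun n => hbF n (fun x => x) rfl
  have hTR : ∀ n, ∑' j, b n j ≤ R := by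
    intro n
    rw [hbsum n]
    linarith [hbound n, hg n]
  have hbR : ∀ n j, b n j ≤ R :=
    fun n j => le_trans (Summable.le_tsum (hbsummable n) j (fun m _ => hb0 n m)) (hTR n)
  have hgR : ∀ n, g n ≤ R := by
    intro n
    have h2 : 0 ≤ ∑' i, a n i := tsum_nonneg (han n)
    linarith [hbound n]
  have hbbnd : ∀ (n j : ℕ), ((j : ℝ) + 1) * b n j ≤ R := by
    intro n j
    calc ((j : ℝ) + 1) * b n j = ∑ _m ∈ Finset.range (j + 1), b n j := by
          rw [Finset.sum_const, Finset.card_range, nsmul_eq_mul]; push_cast; ring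
      _ ≤ ∑ m ∈ Finset.range (j + 1), b n m :=
          Finset.sum_le_sum (fun m hm => he2 n m j (Nat.lt_succ_iff.1 (Finset.mem_range.1 hm)))
      _ ≤ ∑' m, b n m := Summable.sum_le_tsum _ (fun m _ => hb0 n m) (hbsummable n)
      _ ≤ R := hTR n
  -- compactness extraction
  set T : ℕ → ℝ := fun n => ∑' j, b n j with hTdef
  set x : ℕ → (ℕ → ℝ) × ℝ × ℝ := fun n => (b n, g n, T n) with hxdef
  have hK : IsCompact ((Set.univ.pi fun _ : ℕ => Set.Icc (0:ℝ) R) ×ˢ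
      (Set.Icc (0:ℝ) R ×ˢ Set.Icc (0:ℝ) R)) :=
    (isCompact_univ_pi fun _ => isCompact_Icc).prod (isCompact_Icc.prod isCompact_Icc)
  have hxK : ∀ n, x n ∈ (Set.univ.pi fun _ : ℕ => Set.Icc (0:ℝ) R) ×ˢ
      (Set.Icc (0:ℝ) R ×ˢ Set.Icc (0:ℝ) R) := by
    intro n
    refine ⟨fun j _ => ⟨hb0 n j, hbR n j⟩, ⟨hg n, hgR n⟩, tsum_nonneg (fun j => hb0 n j), hTR n⟩
  obtain ⟨l, hlK, φ, hφ, hconv⟩ := hK.tendsto_subseq hxK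
  obtain ⟨β, G, Tl⟩ := l
  obtain ⟨hβmem, hGmem, hTmem⟩ := hlK
  have hconvb : Tendsto (fun k => b (φ k)) atTop (nhds β) :=
    (continuous_fst.tendsto _).comp hconv
  have hconv1 : ∀ j, Tendsto (fun k => b (φ k) j) atTop (nhds (β j)) :=
    fun j => ((continuous_apply j).tendsto _).comp hconvb
  have hconvg : Tendsto (fun k => g (φ k)) atTop (nhds G) :=
    (continuous_fst.tendsto _).comp ((continuous_snd.tendsto _).comp hconv)
  have hconvT : Tendsto (fun k => T (φ k)) atTop (nhds Tl) :=
    (continuous_snd.tendsto _).comp ((continuous_snd.tendsto _).comp hconv)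
  have hβ0 : ∀ j, 0 ≤ β j := fun j => (hβmem j (Set.mem_univ j)).1
  have hG0 : 0 ≤ G := hGmem.1
  have hβbnd : ∀ j : ℕ, ((j : ℝ) + 1) * β j ≤ R := by
    intro j
    refine le_of_tendsto ((hconv1 j).const_mul _) (Eventually.of_forall fun k => ?_)
    exact hbbnd (φ k) j
  have hpartial : ∀ N : ℕ, ∑ j ∈ Finset.range N, β j ≤ Tl := by
    intro N
    refine le_of_tendsto_of_tendsto'
      (tendsto_finset_sum _ (fun j _ => hconv1 j)) hconvT (fun k => ?_)
    exact Summable.sum_le_tsum _ (fun m _ => hb0 _ m) (hbsummable _)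
  have hβsummable : Summable β := summable_of_sum_range_le hβ0 hpartial
  have hβT : ∑' j, β j ≤ Tl := Real.tsum_le_of_sum_range_le hβ0 hpartial
  have hGTR : G + Tl ≤ R := by
    refine le_of_tendsto (hconvg.add hconvT) (Eventually.of_forall fun k => ?_)
    show g (φ k) + T (φ k) ≤ R
    rw [hTdef]
    simpa [hbsum (φ k)] using hbound (φ k)
  refine ⟨φ, hφ, β, G + Tl - ∑' j, β j, hβsummable, hβ0,
    by linarith, by linarith, ?_⟩
  rintro f hf ⟨C, hC⟩
  have hC0 : 0 ≤ C := le_trans (abs_nonneg _) (hC 0)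
  have key : ∀ n, ∑' j, a n j * f (a n j) = ∑' j, b n j * f (b n j) :=
    fun n => (hbF n (fun y => y * f y) (zero_mul _)).symm
  simp only [key]
  rw [Metric.tendsto_atTop]
  intro ε hε
  set ε' := ε / (2 * R + 2) with hε'def
  have hε'pos : 0 < ε' := div_pos hε (by linarith)
  obtain ⟨δ, hδpos, hδ⟩ := Metric.continuousAt_iff.1 (hf.continuousAt (x := 0)) ε' hε'pos
  obtain ⟨N, hN⟩ := exists_nat_gt (R / δ)
  have hNδ : R < δ * ((N : ℝ) + 1) := by
    have := (div_lt_iff₀ hδpos).1 hN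
    nlinarith
  have hsmall : ∀ (u : ℝ) (j : ℕ), N ≤ j → 0 ≤ u → ((j : ℝ) + 1) * u ≤ R →
      |f u - f 0| ≤ ε' := by
    intro u j hj hu hbnd
    have hcast : ((N : ℝ) + 1) ≤ ((j : ℝ) + 1) := by
      have := (Nat.cast_le (α := ℝ)).2 hj; linarith
    have h1 : ((N : ℝ) + 1) * u ≤ R := le_trans (mul_le_mul_of_nonneg_right hcast hu) hbnd
    have h3 : u < δ := by nlinarith
    have := hδ (x := u) (by rw [Real.dist_eq, sub_zero, abs_of_nonneg hu]; exact h3)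
    rw [Real.dist_eq] at this
    exact this.le
  have hsum_bf : ∀ n, Summable (fun j => b n j * f (b n j)) :=
    fun n => summable_mul_f (b n) (hbsummable n) (hb0 n) f hC
  have hβsum_f : Summable (fun j => β j * f (β j)) :=
    summable_mul_f β hβsummable hβ0 f hC
  set M : ℕ → ℝ := fun k => g (φ k) * f 0 + (∑ j ∈ Finset.range N, b (φ k) j * f (b (φ k) j)
    + (T (φ k) - ∑ j ∈ Finset.range N, b (φ k) j) * f 0) with hMdef
  set Minf : ℝ := G * f 0 + (∑ j ∈ Finset.range N, β j * f (β j)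
    + (Tl - ∑ j ∈ Finset.range N, β j) * f 0) with hMinfdef
  have hexprM : ∀ k, |(g (φ k) * f 0 + ∑' j, b (φ k) j * f (b (φ k) j)) - M k| ≤ ε' * R := by
    intro k
    have hcsum : Summable (fun j => b (φ k) (j + N)) :=
      (summable_nat_add_iff N).2 (hbsummable (φ k))
    have hsplit := (Summable.sum_add_tsum_nat_add N (hsum_bf (φ k))).symm
    have hmass := (Summable.sum_add_tsum_nat_add N (hbsummable (φ k))).symm
    have htailR : ∑' j, b (φ k) (j + N) ≤ R := by
      have h0' : 0 ≤ ∑ j ∈ Finset.range N, b (φ k) j :=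
        Finset.sum_nonneg fun j _ => hb0 _ j
      have := hTR (φ k)
      rw [hTdef] at *
      linarith [hmass]
    have hest := tail_est (fun j => b (φ k) (j + N)) hcsum (fun j => hb0 _ _) htailR f hC
      hε'pos.le (fun j => hsmall _ (j + N) (Nat.le_add_left N j) (hb0 _ _) (hbbnd _ _))
    have heq : (g (φ k) * f 0 + ∑' j, b (φ k) j * f (b (φ k) j)) - M k
        = (∑' j, b (φ k) (j + N) * f (b (φ k) (j + N)))
          - (∑' j, b (φ k) (j + N)) * f 0 := by
      simp only [hMdef, hTdef]
      rw [hsplit, hmass]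
      ring
    rw [heq]
    exact hest
  have htargetM : |((G + Tl - ∑' j, β j) * f 0 + ∑' j, β j * f (β j)) - Minf| ≤ ε' * R := by
    have hcsum : Summable (fun j => β (j + N)) := (summable_nat_add_iff N).2 hβsummable
    have hsplit := (Summable.sum_add_tsum_nat_add N hβsum_f).symm
    have hmass := (Summable.sum_add_tsum_nat_add N hβsummable).symm
    have htailR : ∑' j, β (j + N) ≤ R := by
      have h0' : 0 ≤ ∑ j ∈ Finset.range N, β j := Finset.sum_nonneg fun j _ => hβ0 j
      linarith [hmass, hβT, hGTR]
    have hest := tail_est (fun j => β (j + N)) hcsum (fun j => hβ0 _) htailR f hC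
      hε'pos.le (fun j => hsmall _ (j + N) (Nat.le_add_left N j) (hβ0 _) (hβbnd _))
    have heq : ((G + Tl - ∑' j, β j) * f 0 + ∑' j, β j * f (β j)) - Minf
        = (∑' j, β (j + N) * f (β (j + N))) - (∑' j, β (j + N)) * f 0 := by
      rw [hMinfdef, hsplit, hmass]
      ring
    rw [heq]
    exact hest
  have hM : Tendsto M atTop (nhds Minf) := by
    refine (hconvg.mul_const _).add (Tendsto.add ?_ ((hconvT.sub ?_).mul_const _))
    · exact tendsto_finset_sum _ fun j _ =>
        ((continuous_id.mul hf).tendsto (β j)).comp (hconv1 j)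
    · exact tendsto_finset_sum _ fun j _ => hconv1 j
  obtain ⟨K0, hK0⟩ := Metric.tendsto_atTop.1 hM ε' hε'pos
  refine ⟨K0, fun k hk => ?_⟩
  have h3 := hK0 k hk
  rw [Real.dist_eq] at h3 ⊢
  have h1 := hexprM k
  have h2 := htargetM
  have hexp : 2 * (ε' * R) + 2 * ε' = ε := by
    rw [hε'def]; field_simp
  have htri : |(g (φ k) * f 0 + ∑' j, b (φ k) j * f (b (φ k) j))
      - ((G + Tl - ∑' j, β j) * f 0 + ∑' j, β j * f (β j))|
      ≤ |(g (φ k) * f 0 + ∑' j, b (φ k) j * f (b (φ k) j)) - M k| + |M k - Minf|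
        + |Minf - ((G + Tl - ∑' j, β j) * f 0 + ∑' j, β j * f (β j))| := by
    have t1 := abs_sub_le (g (φ k) * f 0 + ∑' j, b (φ k) j * f (b (φ k) j)) (M k)
      ((G + Tl - ∑' j, β j) * f 0 + ∑' j, β j * f (β j))
    have t2 := abs_sub_le (M k) Minf
      ((G + Tl - ∑' j, β j) * f 0 + ∑' j, β j * f (β j))
    linarith
  have h2' : |Minf - ((G + Tl - ∑' j, β j) * f 0 + ∑' j, β j * f (β j))| ≤ ε' * R := by
    rw [abs_sub_comm]; exact h2
  linarith
end

section
/- For each n ≥ 1 let λ⁽ⁿ⁾ = (λ₁⁽ⁿ⁾, …, λₙ⁽ⁿ⁾) ∈ ℝⁿ, and let ω = (α, γ) with α = (α_k)_{k≥1} a summable sequence of nonnegative reals and γ ≥ 0. Assume that T_n(λ⁽ⁿ⁾) converges to ω, i.e. for every bounded continuous function f on ℝ, lim_{n→∞} Σ_{k=1}^n (λ_k⁽ⁿ⁾/n)² f((λ_k⁽ⁿ⁾/n)²) = γ f(0) + Σ_{k=1}^∞ α_k f(α_k). Then for every integer m ≥ 2, lim_{n→∞} (1/n^{2m}) Σ_{k=1}^n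 (λ_k⁽ⁿ⁾)^{2m} = Σ_{k=1}^∞ α_k^m. -/
open Filter

/-- For each `n ≥ 1` let `λ⁽ⁿ⁾ ∈ ℝⁿ` and suppose `T_n(λ⁽ⁿ⁾) → ω = (α,γ)`,
i.e. for every bounded continuous `f` on `ℝ`,
`Σ_{k=1}^n (λ_k⁽ⁿ⁾/n)² f((λ_k⁽ⁿ⁾/n)²) → γ f(0) + Σ_k α_k f(α_k)`. Then for every `m ≥ 2`,
`(1/n^{2m}) Σ_{k=1}^n (λ_k⁽ⁿ⁾)^{2m} → Σ_k α_k^m`. -/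
theorem moment_convergence_pm
    (L : (n : ℕ) → Fin n → ℝ) (α : ℕ → ℝ) (γ : ℝ)
    (hα : Summable α) (hαn : ∀ k, 0 ≤ α k) (hγ : 0 ≤ γ)
    (hconv : ∀ f : ℝ → ℝ, Continuous f → (∃ C : ℝ, ∀ x, |f x| ≤ C) →
      Tendsto (fun n : ℕ => ∑ k : Fin n, (L n k / n) ^ 2 * f ((L n k / n) ^ 2)) atTop
        (nhds (γ * f 0 + ∑' k, α k * f (α k))))
    (m : ℕ) (hm : 2 ≤ m) :
    Tendsto (fun n : ℕ => (1 / (n : ℝ) ^ (2 * m)) * ∑ k : Fin n, (L n k) ^ (2 * m)) atTop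
      (nhds (∑' k, α k ^ m)) := by
  have htsum_nonneg : 0 ≤ ∑' k, α k := tsum_nonneg hαn
  set S : ℝ := γ + ∑' k, α k with hS
  set M : ℝ := S + 1 with hM
  have hM0 : (0:ℝ) < M := by rw [hM, hS]; linarith
  set f : ℝ → ℝ := fun x => (min (max x 0) M) ^ (m - 1) with hf
  have hf_cont : Continuous f :=
    ((continuous_id.max continuous_const).min continuous_const).pow _
  have hf_bd : ∀ x, |f x| ≤ M ^ (m - 1) := by
    intro x
    have h0 : 0 ≤ min (max x 0) M := le_min (le_max_right x 0) hM0.le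
    rw [hf]
    rw [abs_of_nonneg (pow_nonneg h0 _)]
    exact pow_le_pow_left₀ h0 (min_le_right _ _) _
  have hf_val : ∀ x : ℝ, 0 ≤ x → x ≤ M → f x = x ^ (m - 1) := by
    intro x hx0 hxM
    rw [hf]; simp only []
    rw [max_eq_left hx0, min_eq_left hxM]
  have hf0 : f 0 = 0 := by
    rw [hf_val 0 le_rfl hM0.le]
    exact zero_pow (by omega)
  have hfα : ∀ k, f (α k) = α k ^ (m - 1) := by
    intro k
    have hk : α k ≤ M := by
      have h1 : α k ≤ ∑' j, α j := Summable.le_tsum hα k fun j _ => hαn j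
      rw [hM, hS]; linarith
    exact hf_val _ (hαn k) hk
  have hmul : ∀ x : ℝ, x * x ^ (m - 1) = x ^ m := by
    intro x
    rw [mul_comm, ← pow_succ, Nat.sub_add_cancel (by omega)]
  have key := hconv f hf_cont ⟨_, hf_bd⟩
  rw [hf0, mul_zero, zero_add] at key
  have htsum_eq : (∑' k, α k * f (α k)) = ∑' k, α k ^ m := by
    apply tsum_congr
    intro k
    rw [hfα k, hmul]
  rw [htsum_eq] at key
  -- total mass converges
  have hone := hconv (fun _ => 1) continuous_const ⟨1, by simp⟩
  simp only [mul_one] at hone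
  have hev : ∀ᶠ n : ℕ in atTop, (∑ k : Fin n, (L n k / n) ^ 2) < M := by
    apply hone.eventually_lt_const
    rw [hM]; linarith
  apply key.congr'
  filter_upwards [hev] with n hn
  rw [Finset.mul_sum]
  apply Finset.sum_congr rfl
  intro k _
  have hb0 : 0 ≤ (L n k / n) ^ 2 := sq_nonneg _
  have hbM : (L n k / n) ^ 2 ≤ M := by
    refine le_trans ?_ hn.le
    exact Finset.single_le_sum (fun j _ => sq_nonneg (L n j / n)) (Finset.mem_univ k)
  rw [hf_val _ hb0 hbM, hmul, ← pow_mul, div_pow, mul_comm 2 m, mul_comm m 2,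
    one_div, inv_mul_eq_div]
end
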